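/- arXiv:1107.1074 — 4 statements merged into one kernel-verified Lean document; each statement's English description precedes it below -/
import Mathlib

section
/- For every fixed x, y ∈ ℤ^d, the transition probability satisfies p(t; x, y) ~ γ_d · t^{-d/2} as t → ∞; that is, lim_{t→∞} t^{d/2} p(t; x, y) = γ_d. -/
open MeasureTheory Real Filter Topology Asymptotics
open Matrix

/-- Fourier symbol `φ(θ) = ∑_z a(z) cos⟨z,θ⟩` of the random walk on `ℤ^d`. -/
noncomputable def phiSymb (d : ℕ) (a : (Fin d → ℤ) → ℝ) (θ : Fin d → ℝ) : ℝ :=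
  ∑' z : Fin d → ℤ, a z * Real.cos (∑ i, (z i : ℝ) * θ i)

/-- Transition probability `p(t;x,y) = (2π)^{-d} ∫_{[-π,π]^d} e^{φ(θ)t} cos⟨θ,y-x⟩ dθ`. -/
noncomputable def ptrans (d : ℕ) (a : (Fin d → ℤ) → ℝ) (t : ℝ) (x y : Fin d → ℤ) : ℝ :=
  ((2 * π) ^ d)⁻¹ *
    ∫ θ in Set.Icc (fun _ : Fin d => -π) (fun _ : Fin d => π),
      Real.exp (phiSymb d a θ * t) * Real.cos (∑ i, θ i * ((y i : ℝ) - (x i : ℝ)))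

/-- Laplace transform `G_λ(x,y) = ∫_0^∞ e^{-λt} p(t;x,y) dt` (Green's function at `λ = 0`). -/
noncomputable def Glam (d : ℕ) (a : (Fin d → ℤ) → ℝ) (lam : ℝ) (x y : Fin d → ℤ) : ℝ :=
  ∫ t in Set.Ioi (0 : ℝ), Real.exp (-lam * t) * ptrans d a t x y

/-- Hessian matrix `φ''(0)`, with entries `-∑_z a(z) z_i z_j`. -/
noncomputable def hessPhi (d : ℕ) (a : (Fin d → ℤ) → ℝ) : Matrix (Fin d) (Fin d) ℝ :=
  Matrix.of fun i j => -∑' z : Fin d → ℤ, a z * (z i : ℝ) * (z j : ℝ)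

/-- `γ_d = (2π)^{-d/2} |det φ''(0)|^{-1/2}`. -/
noncomputable def gammaConst (d : ℕ) (a : (Fin d → ℤ) → ℝ) : ℝ :=
  ((2 * π) ^ ((d : ℝ) / 2))⁻¹ * (Real.sqrt |(hessPhi d a).det|)⁻¹

/-- `ρ_d(x) = (a/(2π)^d) ∫_{[-π,π]^d} (cos⟨x,θ⟩ - 1)/φ(θ) dθ` for `x ≠ 0`, and `ρ_d(0) = 1`. -/
noncomputable def rhoConst (d : ℕ) (a : (Fin d → ℤ) → ℝ) (x : Fin d → ℤ) : ℝ :=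
  if x = 0 then 1 else
    (-(a 0) / (2 * π) ^ d) *
      ∫ θ in Set.Icc (fun _ : Fin d => -π) (fun _ : Fin d => π),
        (Real.cos (∑ i, (x i : ℝ) * θ i) - 1) / phiSymb d a θ

/-- `γ̃_d(z) = (1/(2(2π)^d)) ∫_{ℝ^d} ⟨v,z⟩² e^{⟨φ''(0)v,v⟩/2} dv`. -/
noncomputable def gammaTilde (d : ℕ) (a : (Fin d → ℤ) → ℝ) (z : Fin d → ℤ) : ℝ :=
  (2 * (2 * π) ^ d)⁻¹ *
    ∫ v : Fin d → ℝ, (∑ i, v i * (z i : ℝ)) ^ 2 *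
      Real.exp ((∑ i, (hessPhi d a).mulVec v i * v i) / 2)

namespace LLT

variable {d : ℕ}

noncomputable def dz (z : Fin d → ℤ) (θ : Fin d → ℝ) : ℝ := ∑ i, (z i : ℝ) * θ i

lemma dz_add (z w : Fin d → ℤ) (θ : Fin d → ℝ) : dz (z + w) θ = dz z θ + dz w θ := by
  simp [dz, add_mul, Finset.sum_add_distrib]

lemma dz_zero (θ : Fin d → ℝ) : dz (0 : Fin d → ℤ) θ = 0 := by simp [dz]

lemma dz_smul (z : Fin d → ℤ) (r : ℝ) (θ : Fin d → ℝ) : dz z (r • θ) = r * dz z θ := by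
  simp only [dz, Finset.mul_sum, Pi.smul_apply, smul_eq_mul]
  exact Finset.sum_congr rfl fun i _ => by ring

lemma dz_single (i : Fin d) (θ : Fin d → ℝ) : dz (Pi.single i 1) θ = θ i := by
  simp [dz, Pi.single_apply, Finset.sum_ite_eq']

noncomputable def dzHom (θ : Fin d → ℝ) : (Fin d → ℤ) →+ ℝ where
  toFun z := dz z θ
  map_zero' := dz_zero θ
  map_add' z w := dz_add z w θ

lemma dz_sq_le (z : Fin d → ℤ) (θ : Fin d → ℝ) :
    (dz z θ) ^ 2 ≤ (∑ i, ((z i : ℝ)) ^ 2) * (∑ i, (θ i) ^ 2) :=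
  Finset.sum_mul_sq_le_sq_mul_sq _ _ _

variable {a : (Fin d → ℤ) → ℝ}

lemma summable_abs_a (hsum : HasSum a 0) : Summable fun z => |a z| :=
  summable_abs_iff.mpr hsum.summable

lemma summable_var' (hvar : Summable fun z : Fin d → ℤ => (∑ i, ((z i : ℝ)) ^ 2) * a z) :
    Summable fun z : Fin d → ℤ => |a z| * (∑ i, ((z i : ℝ)) ^ 2) := by
  have h := summable_abs_iff.mpr hvar
  refine h.congr fun z => ?_
  rw [abs_mul, abs_of_nonneg (by positivity : (0:ℝ) ≤ ∑ i, ((z i : ℝ)) ^ 2), mul_comm]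

lemma summable_cos_sub_one (hsum : HasSum a 0) (θ : Fin d → ℝ) :
    Summable fun z : Fin d → ℤ => a z * (Real.cos (dz z θ) - 1) := by
  refine Summable.of_norm_bounded (g := fun z => |a z| * 2) ((summable_abs_a hsum).mul_right 2)
    fun z => ?_
  rw [norm_mul, Real.norm_eq_abs, Real.norm_eq_abs]
  refine mul_le_mul_of_nonneg_left ?_ (abs_nonneg _)
  rw [abs_sub_comm]
  have h1 := Real.cos_le_one (dz z θ)
  have h2 := Real.neg_one_le_cos (dz z θ)
  rw [abs_le]; constructor <;> linarith

lemma phi_eq (hsum : HasSum a 0) (θ : Fin d → ℝ) :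
    phiSymb d a θ = ∑' z : Fin d → ℤ, a z * (Real.cos (dz z θ) - 1) := by
  have h1 : ∀ z : Fin d → ℤ, a z * Real.cos (dz z θ) = a z * (Real.cos (dz z θ) - 1) + a z := by
    intro z; ring
  have := Summable.tsum_add (summable_cos_sub_one hsum θ) hsum.summable
  calc phiSymb d a θ = ∑' z : Fin d → ℤ, (a z * (Real.cos (dz z θ) - 1) + a z) :=
        tsum_congr h1
    _ = (∑' z : Fin d → ℤ, a z * (Real.cos (dz z θ) - 1)) + ∑' z, a z := this
    _ = ∑' z : Fin d → ℤ, a z * (Real.cos (dz z θ) - 1) := by rw [hsum.tsum_eq, add_zero]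

lemma term_nonpos (hpos : ∀ z : Fin d → ℤ, z ≠ 0 → 0 ≤ a z) (θ : Fin d → ℝ) (z : Fin d → ℤ) :
    a z * (Real.cos (dz z θ) - 1) ≤ 0 := by
  by_cases hz : z = 0
  · subst hz; simp [dz_zero]
  · exact mul_nonpos_of_nonneg_of_nonpos (hpos z hz)
      (sub_nonpos.mpr (Real.cos_le_one _))

lemma phi_le_sum (hsum : HasSum a 0) (hpos : ∀ z : Fin d → ℤ, z ≠ 0 → 0 ≤ a z)
    (θ : Fin d → ℝ) (G : Finset (Fin d → ℤ)) :
    phiSymb d a θ ≤ ∑ z ∈ G, a z * (Real.cos (dz z θ) - 1) := by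
  rw [phi_eq hsum θ]
  have hs : Summable fun z : Fin d → ℤ => -(a z * (Real.cos (dz z θ) - 1)) :=
    (summable_cos_sub_one hsum θ).neg
  have := Summable.sum_le_tsum G (f := fun z : Fin d → ℤ => -(a z * (Real.cos (dz z θ) - 1)))
    (fun z _ => neg_nonneg.mpr (term_nonpos hpos θ z)) hs
  rw [tsum_neg, Finset.sum_neg_distrib] at this
  linarith

lemma phi_nonpos (hsum : HasSum a 0) (hpos : ∀ z : Fin d → ℤ, z ≠ 0 → 0 ≤ a z)
    (θ : Fin d → ℝ) : phiSymb d a θ ≤ 0 := by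
  simpa using phi_le_sum hsum hpos θ ∅

end LLT

namespace LLT

variable {d : ℕ} {a : (Fin d → ℤ) → ℝ}

lemma abs_mul_int_le (z : Fin d → ℤ) (i j : Fin d) :
    |(z i : ℝ) * (z j : ℝ)| ≤ ∑ k, ((z k : ℝ)) ^ 2 := by
  have hi : ((z i : ℝ)) ^ 2 ≤ ∑ k, ((z k : ℝ)) ^ 2 :=
    Finset.single_le_sum (fun k _ => sq_nonneg ((z k : ℝ))) (Finset.mem_univ i)
  have hj : ((z j : ℝ)) ^ 2 ≤ ∑ k, ((z k : ℝ)) ^ 2 :=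
    Finset.single_le_sum (fun k _ => sq_nonneg ((z k : ℝ))) (Finset.mem_univ j)
  have := abs_mul ((z i : ℝ)) ((z j : ℝ))
  nlinarith [sq_nonneg (|(z i : ℝ)| - |(z j : ℝ)|), sq_abs ((z i : ℝ)), sq_abs ((z j : ℝ)),
    abs_nonneg ((z i : ℝ)), abs_nonneg ((z j : ℝ))]

lemma summable_ij (hvar : Summable fun z : Fin d → ℤ => (∑ i, ((z i : ℝ)) ^ 2) * a z)
    (i j : Fin d) : Summable fun z : Fin d → ℤ => a z * (z i : ℝ) * (z j : ℝ) := by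
  refine Summable.of_norm_bounded (summable_var' hvar) fun z => ?_
  rw [Real.norm_eq_abs, mul_assoc, abs_mul]
  exact mul_le_mul_of_nonneg_left (abs_mul_int_le z i j) (abs_nonneg _)

lemma summable_sq (hvar : Summable fun z : Fin d → ℤ => (∑ i, ((z i : ℝ)) ^ 2) * a z)
    (u : Fin d → ℝ) : Summable fun z : Fin d → ℤ => a z * (dz z u) ^ 2 := by
  refine Summable.of_norm_bounded (((summable_var' hvar)).mul_right (∑ i, (u i) ^ 2))
    fun z => ?_
  rw [Real.norm_eq_abs, abs_mul, abs_of_nonneg (sq_nonneg (dz z u)), mul_assoc]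
  exact mul_le_mul_of_nonneg_left (dz_sq_le z u) (abs_nonneg _)

lemma term_sq_nonneg (hpos : ∀ z : Fin d → ℤ, z ≠ 0 → 0 ≤ a z) (u : Fin d → ℝ)
    (z : Fin d → ℤ) : 0 ≤ a z * (dz z u) ^ 2 := by
  by_cases hz : z = 0
  · subst hz; simp [dz_zero]
  · exact mul_nonneg (hpos z hz) (sq_nonneg _)

lemma exists_dz_ne (hirr : AddSubgroup.closure {z : Fin d → ℤ | 0 < a z} = ⊤)
    {u : Fin d → ℝ} (hu : u ≠ 0) : ∃ z : Fin d → ℤ, 0 < a z ∧ dz z u ≠ 0 := by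
  by_contra h
  push_neg at h
  have hle : AddSubgroup.closure {z : Fin d → ℤ | 0 < a z}
      ≤ AddSubgroup.comap (dzHom u) (⊥ : AddSubgroup ℝ) := by
    refine (AddSubgroup.closure_le _).mpr fun z hz => ?_
    simpa [AddSubgroup.mem_comap, dzHom] using h z hz
  rw [hirr, top_le_iff] at hle
  apply hu
  funext i
  have : (Pi.single i 1 : Fin d → ℤ) ∈ AddSubgroup.comap (dzHom u) (⊥ : AddSubgroup ℝ) := by
    rw [hle]; trivial
  simpa [AddSubgroup.mem_comap, dzHom, dz_single] using this

lemma B_pos (hpos : ∀ z : Fin d → ℤ, z ≠ 0 → 0 ≤ a z)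
    (hvar : Summable fun z : Fin d → ℤ => (∑ i, ((z i : ℝ)) ^ 2) * a z)
    (hirr : AddSubgroup.closure {z : Fin d → ℤ | 0 < a z} = ⊤)
    {u : Fin d → ℝ} (hu : u ≠ 0) : 0 < ∑' z : Fin d → ℤ, a z * (dz z u) ^ 2 := by
  obtain ⟨z₀, hz₀, hdz⟩ := exists_dz_ne hirr hu
  have hterm : 0 < a z₀ * (dz z₀ u) ^ 2 :=
    mul_pos hz₀ (by positivity)
  exact lt_of_lt_of_le hterm (Summable.le_tsum (summable_sq hvar u) z₀
    fun z _ => term_sq_nonneg hpos u z)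

noncomputable def Qmat (d : ℕ) (a : (Fin d → ℤ) → ℝ) : Matrix (Fin d) (Fin d) ℝ :=
  Matrix.of fun i j => ∑' z : Fin d → ℤ, a z * (z i : ℝ) * (z j : ℝ)

lemma hessPhi_eq : hessPhi d a = -Qmat d a := by
  ext i j
  simp [hessPhi, Qmat]

lemma B_eq_dot (hvar : Summable fun z : Fin d → ℤ => (∑ i, ((z i : ℝ)) ^ 2) * a z)
    (u : Fin d → ℝ) :
    ∑' z : Fin d → ℤ, a z * (dz z u) ^ 2 = u ⬝ᵥ (Qmat d a).mulVec u := by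
  have key : ∀ z : Fin d → ℤ, a z * (dz z u) ^ 2
      = ∑ p ∈ (Finset.univ ×ˢ Finset.univ : Finset (Fin d × Fin d)),
          (a z * (z p.1 : ℝ) * (z p.2 : ℝ)) * (u p.1 * u p.2) := by
    intro z
    have h2 : (dz z u) ^ 2 = ∑ p ∈ (Finset.univ ×ˢ Finset.univ : Finset (Fin d × Fin d)),
        ((z p.1 : ℝ) * u p.1) * ((z p.2 : ℝ) * u p.2) := by
      rw [sq, dz, Finset.sum_mul_sum, Finset.sum_product]
    rw [h2, Finset.mul_sum]
    exact Finset.sum_congr rfl fun p _ => by ring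
  calc ∑' z : Fin d → ℤ, a z * (dz z u) ^ 2
      = ∑' z : Fin d → ℤ, ∑ p ∈ (Finset.univ ×ˢ Finset.univ : Finset (Fin d × Fin d)),
          (a z * (z p.1 : ℝ) * (z p.2 : ℝ)) * (u p.1 * u p.2) := tsum_congr key
    _ = ∑ p ∈ (Finset.univ ×ˢ Finset.univ : Finset (Fin d × Fin d)),
          ∑' z : Fin d → ℤ, (a z * (z p.1 : ℝ) * (z p.2 : ℝ)) * (u p.1 * u p.2) :=
        Summable.tsum_finsetSum fun p _ => (summable_ij hvar p.1 p.2).mul_right _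
    _ = ∑ p ∈ (Finset.univ ×ˢ Finset.univ : Finset (Fin d × Fin d)),
          (∑' z : Fin d → ℤ, a z * (z p.1 : ℝ) * (z p.2 : ℝ)) * (u p.1 * u p.2) :=
        Finset.sum_congr rfl fun p _ => tsum_mul_right
    _ = u ⬝ᵥ (Qmat d a).mulVec u := by
        rw [Finset.sum_product]
        simp only [dotProduct, Matrix.mulVec, Qmat, Matrix.of_apply]
        refine Finset.sum_congr rfl fun i _ => ?_
        rw [Finset.mul_sum]
        exact Finset.sum_congr rfl fun j _ => by ring

lemma Qmat_posDef (hpos : ∀ z : Fin d → ℤ, z ≠ 0 → 0 ≤ a z)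
    (hvar : Summable fun z : Fin d → ℤ => (∑ i, ((z i : ℝ)) ^ 2) * a z)
    (hirr : AddSubgroup.closure {z : Fin d → ℤ | 0 < a z} = ⊤) :
    (Qmat d a).PosDef := by
  refine Matrix.PosDef.of_dotProduct_mulVec_pos ?_ ?_
  · ext i j
    simp only [Matrix.conjTranspose_apply, Qmat, Matrix.of_apply, star_trivial]
    exact tsum_congr fun z => by ring
  · intro x hx
    have := B_pos hpos hvar hirr hx
    rw [B_eq_dot hvar x] at this
    simpa using this

end LLT

section PosSemidefSqrtPort
open scoped MatrixOrder

/-- Square root of a positive semidefinite real matrix (ported from old Mathlib). -/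
noncomputable def Matrix.PosSemidef.sqrt {n : Type*} [Fintype n] [DecidableEq n]
    {A : Matrix n n ℝ} (_ : A.PosSemidef) : Matrix n n ℝ := CFC.sqrt A

lemma Matrix.PosSemidef.sqrt_mul_self {n : Type*} [Fintype n] [DecidableEq n]
    {A : Matrix n n ℝ} (hA : A.PosSemidef) : hA.sqrt * hA.sqrt = A :=
  CFC.sqrt_mul_sqrt_self A hA.nonneg

lemma Matrix.PosSemidef.posSemidef_sqrt {n : Type*} [Fintype n] [DecidableEq n]
    {A : Matrix n n ℝ} (hA : A.PosSemidef) : hA.sqrt.PosSemidef :=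
  Matrix.nonneg_iff_posSemidef.mp (CFC.sqrt_nonneg A)

end PosSemidefSqrtPort

namespace LLT

variable {d : ℕ} {a : (Fin d → ℤ) → ℝ}

lemma quad_eq_sum_sq (hQ : (Qmat d a).PosDef) (u : Fin d → ℝ) :
    dotProduct u ((Qmat d a).mulVec u)
      = ∑ i, ((hQ.posSemidef.sqrt).mulVec u i) ^ 2 := by
  set S := hQ.posSemidef.sqrt with hSdef
  have hSsym : Sᵀ = S := by
    have h := hQ.posSemidef.posSemidef_sqrt.1
    ext i j
    have := congrFun (congrFun h i) j
    simpa [Matrix.conjTranspose_apply, star_trivial] using this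
  have hSS : S * S = Qmat d a := hQ.posSemidef.sqrt_mul_self
  have key : dotProduct (S.mulVec u) (S.mulVec u)
      = dotProduct u ((Qmat d a).mulVec u) := by
    rw [Matrix.dotProduct_mulVec]
    have h1 : Matrix.vecMul (S.mulVec u) S = (Qmat d a).mulVec u := by
      calc Matrix.vecMul (S.mulVec u) S = Matrix.vecMul (S.mulVec u) Sᵀ := by rw [hSsym]
        _ = S *ᵥ (S *ᵥ u) := by rw [Matrix.vecMul_transpose]
        _ = (S * S) *ᵥ u := by rw [Matrix.mulVec_mulVec]
        _ = _ := by rw [hSS]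
    rw [h1, dotProduct_comm]
  rw [← key]
  simp [dotProduct, sq]

lemma det_sqrt_sq (hQ : (Qmat d a).PosDef) :
    |(hQ.posSemidef.sqrt).det| = Real.sqrt ((Qmat d a).det) := by
  have hSS : hQ.posSemidef.sqrt * hQ.posSemidef.sqrt = Qmat d a := hQ.posSemidef.sqrt_mul_self
  have h2 : (hQ.posSemidef.sqrt).det ^ 2 = (Qmat d a).det := by
    rw [sq, ← Matrix.det_mul, hSS]
  rw [← h2, Real.sqrt_sq_eq_abs]

lemma det_sqrt_ne (hQ : (Qmat d a).PosDef) : (hQ.posSemidef.sqrt).det ≠ 0 := by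
  intro h
  have hSS : hQ.posSemidef.sqrt * hQ.posSemidef.sqrt = Qmat d a := hQ.posSemidef.sqrt_mul_self
  have := hQ.det_pos
  rw [← hSS, Matrix.det_mul, h, mul_zero] at this
  exact lt_irrefl _ this

lemma abs_det_hess (hQ : (Qmat d a).PosDef) : |(hessPhi d a).det| = (Qmat d a).det := by
  rw [hessPhi_eq (a := a), Matrix.det_neg, abs_mul, abs_pow, abs_neg, abs_one, one_pow, one_mul,
    abs_of_pos hQ.det_pos]

lemma integral_gauss_one_dim : ∫ x : ℝ, Real.exp (-(x ^ 2) / 2) = Real.sqrt (2 * π) := by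
  have h := integral_gaussian (1/2 : ℝ)
  simp_rw [show ∀ x : ℝ, -(1/2 : ℝ) * x ^ 2 = -(x ^ 2) / 2 from fun x => by ring] at h
  rw [h]
  congr 1
  ring

lemma integral_gauss_std :
    ∫ w : Fin d → ℝ, Real.exp (-(∑ i, (w i) ^ 2) / 2) = Real.sqrt (2 * π) ^ d := by
  have h1 : ∀ w : Fin d → ℝ, Real.exp (-(∑ i, (w i) ^ 2) / 2)
      = ∏ i, Real.exp (-((w i) ^ 2) / 2) := by
    intro w
    rw [← Real.exp_sum]
    congr 1
    rw [← Finset.sum_div, ← Finset.sum_neg_distrib]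
  simp_rw [h1]
  rw [integral_fintype_prod_volume_eq_pow (ι := Fin d) (fun x : ℝ => Real.exp (-(x ^ 2) / 2)),
    integral_gauss_one_dim, Fintype.card_fin]

lemma integral_gauss_quad (hQ : (Qmat d a).PosDef) :
    ∫ u : Fin d → ℝ, Real.exp (-(dotProduct u ((Qmat d a).mulVec u)) / 2)
      = Real.sqrt (2 * π) ^ d / Real.sqrt |(hessPhi d a).det| := by
  set S := hQ.posSemidef.sqrt with hSdef
  set L : (Fin d → ℝ) →ₗ[ℝ] (Fin d → ℝ) := Matrix.toLin' S with hLdef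
  have hdetL : LinearMap.det L = S.det := LinearMap.det_toLin' S
  have hdetL0 : LinearMap.det L ≠ 0 := by rw [hdetL]; exact det_sqrt_ne hQ
  set g : (Fin d → ℝ) → ℝ := fun w => Real.exp (-(∑ i, (w i) ^ 2) / 2) with hgdef
  have hg : Continuous g := by
    apply Real.continuous_exp.comp
    exact (continuous_finset_sum _ fun i _ => (continuous_apply i).pow 2).neg.div_const 2
  have hL : Continuous L := L.continuous_of_finiteDimensional
  have key : ∀ u, Real.exp (-(dotProduct u ((Qmat d a).mulVec u)) / 2) = g (L u) := by
    intro u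
    rw [quad_eq_sum_sq hQ u, hgdef]
    simp only [hLdef, Matrix.toLin'_apply]
    rfl
  simp_rw [key]
  have hmap : Measure.map L (volume : Measure (Fin d → ℝ))
      = ENNReal.ofReal |(LinearMap.det L)⁻¹| • volume :=
    Measure.map_linearMap_addHaar_eq_smul_addHaar volume hdetL0
  have : ∫ u, g (L u) = ∫ w, g w ∂(Measure.map L volume) :=
    (integral_map hL.aemeasurable hg.aestronglyMeasurable).symm
  rw [this, hmap, integral_smul_measure, ENNReal.toReal_ofReal (abs_nonneg _),
    integral_gauss_std (d := d), hdetL, smul_eq_mul, abs_inv, det_sqrt_sq hQ,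
    abs_det_hess hQ]
  rw [div_eq_mul_inv, mul_comm]

end LLT

namespace LLT

variable {d : ℕ} {a : (Fin d → ℤ) → ℝ}

lemma continuous_dz (z : Fin d → ℤ) : Continuous (dz z) :=
  continuous_finset_sum _ fun i _ => continuous_const.mul (continuous_apply i)

lemma continuous_phi (hsum : HasSum a 0) : Continuous (phiSymb d a) := by
  have h0 : phiSymb d a = fun θ => ∑' z : Fin d → ℤ, a z * Real.cos (dz z θ) := rfl
  rw [h0]
  refine continuous_tsum (fun z => (continuous_const.mul (Real.continuous_cos.comp (continuous_dz z))))
    (summable_abs_a hsum) fun z θ => ?_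
  rw [Real.norm_eq_abs, abs_mul]
  exact mul_le_of_le_one_right (abs_nonneg _) (Real.abs_cos_le_one _)

lemma mem_Icc_pi {θ : Fin d → ℝ} :
    θ ∈ Set.Icc (fun _ : Fin d => -π) (fun _ : Fin d => π) ↔ ∀ i, -π ≤ θ i ∧ θ i ≤ π := by
  constructor
  · rintro ⟨h1, h2⟩ i; exact ⟨h1 i, h2 i⟩
  · intro h; exact ⟨fun i => (h i).1, fun i => (h i).2⟩

lemma phi_neg (hsum : HasSum a 0) (hpos : ∀ z : Fin d → ℤ, z ≠ 0 → 0 ≤ a z)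
    (hirr : AddSubgroup.closure {z : Fin d → ℤ | 0 < a z} = ⊤)
    {θ : Fin d → ℝ} (hθI : θ ∈ Set.Icc (fun _ : Fin d => -π) (fun _ : Fin d => π))
    (hθ : θ ≠ 0) : phiSymb d a θ < 0 := by
  rcases lt_or_eq_of_le (phi_nonpos hsum hpos θ) with h | h
  · exact h
  exfalso
  -- all terms vanish
  have hterm0 : ∀ z : Fin d → ℤ, a z * (Real.cos (dz z θ) - 1) = 0 := by
    intro z
    have hle : -(a z * (Real.cos (dz z θ) - 1))
        ≤ ∑' w : Fin d → ℤ, -(a w * (Real.cos (dz w θ) - 1)) :=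
      Summable.le_tsum ((summable_cos_sub_one hsum θ).neg) z
        fun w _ => neg_nonneg.mpr (term_nonpos hpos θ w)
    rw [tsum_neg, ← phi_eq hsum θ, h, neg_zero] at hle
    have := term_nonpos hpos θ z
    linarith
  -- hence the support is in the subgroup of 2π-integrality
  have hmem : ∀ z : Fin d → ℤ, 0 < a z →
      z ∈ AddSubgroup.comap (dzHom θ) (AddSubgroup.zmultiples (2 * π)) := by
    intro z hz
    have h1 : Real.cos (dz z θ) = 1 := by
      have := hterm0 z
      have h2 : Real.cos (dz z θ) - 1 = 0 := by
        rcases mul_eq_zero.mp this with h' | h'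
        · exact absurd h' (ne_of_gt hz)
        · exact h'
      linarith
    obtain ⟨n, hn⟩ := (Real.cos_eq_one_iff _).mp h1
    refine AddSubgroup.mem_comap.mpr ?_
    refine AddSubgroup.mem_zmultiples_iff.mpr ⟨n, ?_⟩
    simpa [dzHom, zsmul_eq_mul] using hn
  have hle : AddSubgroup.closure {z : Fin d → ℤ | 0 < a z}
      ≤ AddSubgroup.comap (dzHom θ) (AddSubgroup.zmultiples (2 * π)) :=
    (AddSubgroup.closure_le _).mpr fun z hz => hmem z hz
  rw [hirr, top_le_iff] at hle
  apply hθ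
  funext i
  have hsingle : (Pi.single i 1 : Fin d → ℤ)
      ∈ AddSubgroup.comap (dzHom θ) (AddSubgroup.zmultiples (2 * π)) := by
    rw [hle]; trivial
  rw [AddSubgroup.mem_comap, AddSubgroup.mem_zmultiples_iff] at hsingle
  obtain ⟨n, hn⟩ := hsingle
  have hn' : (n : ℝ) * (2 * π) = θ i := by
    simpa [dzHom, dz_single, zsmul_eq_mul] using hn
  have hi := mem_Icc_pi.mp hθI i
  have : n = 0 := by
    by_contra hn0
    have h1 : (1 : ℝ) ≤ |(n : ℝ)| := by
      rw [← Int.cast_abs]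
      exact_mod_cast Int.one_le_abs (by exact_mod_cast hn0)
    have h2 : |θ i| ≤ π := abs_le.mpr hi
    rw [← hn', abs_mul, abs_of_pos (by positivity : (0:ℝ) < 2 * π)] at h2
    nlinarith [Real.pi_pos]
  rw [this] at hn'
  simpa using hn'.symm

end LLT

namespace LLT

variable {d : ℕ} {a : (Fin d → ℤ) → ℝ}

lemma phi_quad_bound (hd : 1 ≤ d) (hsum : HasSum a 0)
    (hpos : ∀ z : Fin d → ℤ, z ≠ 0 → 0 ≤ a z)
    (hirr : AddSubgroup.closure {z : Fin d → ℤ | 0 < a z} = ⊤) :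
    ∃ c : ℝ, 0 < c ∧ ∀ θ ∈ Set.Icc (fun _ : Fin d => -π) (fun _ : Fin d => π),
      phiSymb d a θ ≤ -c * ∑ i, (θ i) ^ 2 := by
  classical
  -- the unit sphere (for the ℓ² quadratic) is compact
  set Sph : Set (Fin d → ℝ) := {v | ∑ i, (v i) ^ 2 = 1} with hSph
  have hSphClosed : IsClosed Sph :=
    isClosed_eq (continuous_finset_sum _ fun i _ => (continuous_apply i).pow 2)
      continuous_const
  have hSphSub : Sph ⊆ Set.Icc (fun _ : Fin d => -1) (fun _ : Fin d => 1) := by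
    intro v hv
    have hb : ∀ i, (v i) ^ 2 ≤ 1 := by
      intro i
      have : (v i) ^ 2 ≤ ∑ j, (v j) ^ 2 :=
        Finset.single_le_sum (fun j _ => sq_nonneg (v j)) (Finset.mem_univ i)
      rw [hv] at this; exact this
    constructor
    · intro i
      show (-1 : ℝ) ≤ v i
      nlinarith [hb i]
    · intro i
      show v i ≤ (1 : ℝ)
      nlinarith [hb i]
  have hSphCompact : IsCompact Sph :=
    (isCompact_Icc).of_isClosed_subset hSphClosed hSphSub
  have hSphNe : Sph.Nonempty := by
    refine ⟨Pi.single ⟨0, hd⟩ 1, ?_⟩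
    simp [hSph, Pi.single_apply]
  -- finite subcover
  set U : {z : Fin d → ℤ // 0 < a z} → Set (Fin d → ℝ) := fun z => {v | dz z.1 v ≠ 0} with hU
  have hUopen : ∀ z, IsOpen (U z) := fun z =>
    (isOpen_compl_singleton).preimage (continuous_dz z.1)
  have hcover : Sph ⊆ ⋃ z, U z := by
    intro v hv
    have hv0 : v ≠ 0 := by
      intro h
      rw [h] at hv
      simp [hSph] at hv
    obtain ⟨z, hz, hdz⟩ := exists_dz_ne hirr hv0
    exact Set.mem_iUnion.mpr ⟨⟨z, hz⟩, hdz⟩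
  obtain ⟨t, ht⟩ := hSphCompact.elim_finite_subcover U hUopen hcover
  -- the finite quadratic form
  set q : (Fin d → ℝ) → ℝ := fun v => ∑ z ∈ t, a z.1 * (dz z.1 v) ^ 2 with hq
  have hqcont : Continuous q :=
    continuous_finset_sum _ fun z _ => continuous_const.mul ((continuous_dz z.1).pow 2)
  have hqnonneg : ∀ v, 0 ≤ q v := fun v =>
    Finset.sum_nonneg fun z _ => mul_nonneg z.2.le (sq_nonneg _)
  have hqpos : ∀ v ∈ Sph, 0 < q v := by
    intro v hv
    obtain ⟨z, hzt, hzU⟩ := Set.mem_iUnion₂.mp (ht hv)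
    have hne : dz z.1 v ≠ 0 := hzU
    have hterm : 0 < a z.1 * (dz z.1 v) ^ 2 := mul_pos z.2 (sq_pos_of_ne_zero hne)
    refine lt_of_lt_of_le hterm ?_
    exact Finset.single_le_sum
      (f := fun w : {z : Fin d → ℤ // 0 < a z} => a w.1 * (dz w.1 v) ^ 2)
      (fun w _ => mul_nonneg w.2.le (sq_nonneg _)) hzt
  -- minimum on the sphere
  obtain ⟨v₀, hv₀S, hv₀min⟩ := hSphCompact.exists_isMinOn hSphNe hqcont.continuousOn
  set c₀ : ℝ := q v₀ with hc₀
  have hc₀pos : 0 < c₀ := hqpos v₀ hv₀S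
  -- homogeneity: q v ≥ c₀ * ∑ v_i^2
  have hqlow : ∀ v : Fin d → ℝ, c₀ * ∑ i, (v i) ^ 2 ≤ q v := by
    intro v
    by_cases hv : v = 0
    · subst hv; simp [hq, dz, Finset.mul_sum]
    · set r : ℝ := Real.sqrt (∑ i, (v i) ^ 2) with hr
      have hsumpos : 0 < ∑ i, (v i) ^ 2 := by
        obtain ⟨i, hi⟩ : ∃ i, v i ≠ 0 := by
          by_contra h
          push_neg at h
          exact hv (funext h)
        exact lt_of_lt_of_le (sq_pos_of_ne_zero hi)
          (Finset.single_le_sum (fun j _ => sq_nonneg (v j)) (Finset.mem_univ i))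
      have hrpos : 0 < r := Real.sqrt_pos.mpr hsumpos
      have hw : (r⁻¹ • v) ∈ Sph := by
        simp only [hSph, Set.mem_setOf_eq, Pi.smul_apply, smul_eq_mul, mul_pow]
        rw [← Finset.mul_sum]
        rw [inv_pow, hr, Real.sq_sqrt hsumpos.le]
        exact inv_mul_cancel₀ hsumpos.ne'
      have hmin : q v₀ ≤ q (r⁻¹ • v) := hv₀min hw
      have hqw : q (r⁻¹ • v) = r⁻¹ ^ 2 * q v := by
        simp only [hq, Finset.mul_sum]
        refine Finset.sum_congr rfl fun z _ => ?_
        rw [dz_smul]; ring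
      rw [hqw] at hmin
      have : c₀ ≤ r⁻¹ ^ 2 * q v := hmin
      have hr2 : r ^ 2 = ∑ i, (v i) ^ 2 := Real.sq_sqrt hsumpos.le
      calc c₀ * ∑ i, (v i) ^ 2 = c₀ * r ^ 2 := by rw [hr2]
        _ ≤ (r⁻¹ ^ 2 * q v) * r ^ 2 := by
            have := mul_le_mul_of_nonneg_right this (sq_nonneg r)
            exact this
        _ = q v := by field_simp
  -- the "far" compact region
  set K₂ : Set (Fin d → ℝ) := (Set.Icc (fun _ : Fin d => -π) (fun _ : Fin d => π))
      ∩ (⋃ z ∈ t, {θ | π ≤ |dz z.1 θ|}) with hK₂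
  have hK₂compact : IsCompact K₂ := by
    refine IsCompact.inter_right isCompact_Icc ?_
    refine Set.Finite.isClosed_biUnion t.finite_toSet fun z _ => ?_
    exact isClosed_le continuous_const ((continuous_dz z.1).abs)
  have hK₂c : ∃ c₂ : ℝ, 0 < c₂ ∧ ∀ θ ∈ K₂, phiSymb d a θ ≤ -c₂ * ∑ i, (θ i) ^ 2 := by
    by_cases hKne : K₂.Nonempty
    · obtain ⟨θ₀, hθ₀K, hθ₀max⟩ := hK₂compact.exists_isMaxOn hKne
        (continuous_phi hsum).continuousOn
      have hθ₀ne : θ₀ ≠ 0 := by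
        intro h
        obtain ⟨-, hmem⟩ := hθ₀K
        obtain ⟨z, hzt, hz⟩ := Set.mem_iUnion₂.mp hmem
        rw [h] at hz
        simp only [Set.mem_setOf_eq] at hz
        have : dz z.1 (0 : Fin d → ℝ) = 0 := by simp [dz]
        rw [this] at hz
        simp at hz
        linarith [Real.pi_pos]
      have hφ₀ : phiSymb d a θ₀ < 0 := phi_neg hsum hpos hirr hθ₀K.1 hθ₀ne
      have hdpi : (0:ℝ) < d * π ^ 2 := by
        have h1d : (1:ℝ) ≤ d := by exact_mod_cast hd
        nlinarith [Real.pi_pos]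
      refine ⟨(-phiSymb d a θ₀) / (d * π ^ 2), div_pos (by linarith) hdpi, fun θ hθ => ?_⟩
      have h1 : phiSymb d a θ ≤ phiSymb d a θ₀ := hθ₀max hθ
      have h2 : ∑ i, (θ i) ^ 2 ≤ d * π ^ 2 := by
        have : ∀ i, (θ i) ^ 2 ≤ π ^ 2 := by
          intro i
          have hi := mem_Icc_pi.mp hθ.1 i
          nlinarith [hi.1, hi.2]
        calc ∑ i, (θ i) ^ 2 ≤ ∑ _i : Fin d, π ^ 2 := Finset.sum_le_sum fun i _ => this i
          _ = d * π ^ 2 := by simp [Finset.sum_const, nsmul_eq_mul]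
      have h5 : (-phiSymb d a θ₀) / (d * π ^ 2) * ∑ i, (θ i) ^ 2 ≤ -phiSymb d a θ := by
        calc (-phiSymb d a θ₀) / (d * π ^ 2) * ∑ i, (θ i) ^ 2
            ≤ (-phiSymb d a θ₀) / (d * π ^ 2) * (d * π ^ 2) := by
              apply mul_le_mul_of_nonneg_left h2
              exact le_of_lt (div_pos (by linarith) hdpi)
          _ = -phiSymb d a θ₀ := by field_simp
          _ ≤ -phiSymb d a θ := by linarith
      linarith [h5]
    · exact ⟨1, one_pos, fun θ hθ => absurd ⟨θ, hθ⟩ hKne⟩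
  obtain ⟨c₂, hc₂pos, hc₂⟩ := hK₂c
  -- combine
  refine ⟨min (2 / π ^ 2 * c₀) c₂, lt_min (by positivity) hc₂pos, fun θ hθ => ?_⟩
  by_cases hP : ∀ z ∈ t, |dz z.1 θ| ≤ π
  · -- near region: use cosine quadratic bound
    have h1 : phiSymb d a θ ≤ ∑ z ∈ t, a z.1 * (Real.cos (dz z.1 θ) - 1) := by
      have := phi_le_sum hsum hpos θ (t.image Subtype.val)
      rwa [Finset.sum_image (fun x _ y _ h => Subtype.val_injective h)] at this
    have h2 : ∑ z ∈ t, a z.1 * (Real.cos (dz z.1 θ) - 1) ≤ -(2 / π ^ 2) * q θ := by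
      have expand : -(2 / π ^ 2) * q θ
          = ∑ z ∈ t, -(2 / π ^ 2 * (a z.1 * (dz z.1 θ) ^ 2)) := by
        simp only [hq, Finset.mul_sum, neg_mul, Finset.sum_neg_distrib]
      rw [expand]
      refine Finset.sum_le_sum fun z hz => ?_
      have hc := Real.cos_le_one_sub_mul_cos_sq (hP z hz)
      have : Real.cos (dz z.1 θ) - 1 ≤ -(2 / π ^ 2 * (dz z.1 θ) ^ 2) := by linarith
      calc a z.1 * (Real.cos (dz z.1 θ) - 1)
          ≤ a z.1 * -(2 / π ^ 2 * (dz z.1 θ) ^ 2) :=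
            mul_le_mul_of_nonneg_left this z.2.le
        _ = -(2 / π ^ 2 * (a z.1 * (dz z.1 θ) ^ 2)) := by ring
    have h3 : c₀ * ∑ i, (θ i) ^ 2 ≤ q θ := hqlow θ
    have hππ : (0:ℝ) < 2 / π ^ 2 := by positivity
    calc phiSymb d a θ ≤ -(2 / π ^ 2) * q θ := le_trans h1 h2
      _ ≤ -(2 / π ^ 2) * (c₀ * ∑ i, (θ i) ^ 2) := by nlinarith
      _ = -(2 / π ^ 2 * c₀) * ∑ i, (θ i) ^ 2 := by ring
      _ ≤ -min (2 / π ^ 2 * c₀) c₂ * ∑ i, (θ i) ^ 2 := by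
          have h4 : min (2 / π ^ 2 * c₀) c₂ ≤ 2 / π ^ 2 * c₀ := min_le_left _ _
          have h5 : (0:ℝ) ≤ ∑ i, (θ i) ^ 2 := by positivity
          nlinarith
  · -- far region
    push_neg at hP
    obtain ⟨z, hzt, hz⟩ := hP
    have hθK₂ : θ ∈ K₂ := ⟨hθ, Set.mem_iUnion₂.mpr ⟨z, hzt, hz.le⟩⟩
    have := hc₂ θ hθK₂
    calc phiSymb d a θ ≤ -c₂ * ∑ i, (θ i) ^ 2 := this
      _ ≤ -min (2 / π ^ 2 * c₀) c₂ * ∑ i, (θ i) ^ 2 := by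
          have h4 : min (2 / π ^ 2 * c₀) c₂ ≤ c₂ := min_le_right _ _
          have h5 : (0:ℝ) ≤ ∑ i, (θ i) ^ 2 := by positivity
          nlinarith

end LLT

namespace LLT

variable {d : ℕ} {a : (Fin d → ℤ) → ℝ}

lemma abs_cos_sub_one_le (x : ℝ) : |Real.cos x - 1| ≤ x ^ 2 / 2 := by
  have h1 := Real.one_sub_sq_div_two_le_cos (x := x)
  have h2 := Real.cos_le_one x
  rw [abs_le]
  constructor <;> linarith

lemma key_limit (c : ℝ) :
    Tendsto (fun t : ℝ => (Real.cos ((Real.sqrt t)⁻¹ * c) - 1) * t) atTop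
      (𝓝 (-(c ^ 2) / 2)) := by
  set E : ℝ → ℝ := fun t => (Real.cos ((Real.sqrt t)⁻¹ * c) - 1) * t + c ^ 2 / 2 with hE
  have hE0 : Tendsto E atTop (𝓝 0) := by
    apply squeeze_zero_norm' (a := fun t => (5 * c ^ 4 / 96) / t)
    · filter_upwards [eventually_ge_atTop (max 1 (c ^ 2))] with t ht
      have ht1 : (1:ℝ) ≤ t := le_trans (le_max_left _ _) ht
      have htc : c ^ 2 ≤ t := le_trans (le_max_right _ _) ht
      have ht0 : (0:ℝ) < t := by linarith
      have hst : Real.sqrt t ≠ 0 := by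
        rw [Real.sqrt_ne_zero ht0.le]; linarith
      set x : ℝ := (Real.sqrt t)⁻¹ * c with hx
      have hx2 : x ^ 2 = c ^ 2 / t := by
        rw [hx, mul_pow, inv_pow, Real.sq_sqrt ht0.le]
        ring
      have hxle : |x| ≤ 1 := by
        rw [← Real.sqrt_one, ← Real.sqrt_sq_eq_abs]
        apply Real.sqrt_le_sqrt
        rw [hx2]
        rw [div_le_one ht0]
        linarith
      have hb := Real.cos_bound hxle
      have hEeq : E t = (Real.cos x - (1 - x ^ 2 / 2)) * t := by
        rw [hE]
        simp only
        rw [hx2]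
        field_simp
        rw [hx]; ring_nf
      rw [hEeq, Real.norm_eq_abs, abs_mul, abs_of_pos ht0]
      have hx4 : |x| ^ 4 = c ^ 4 / t ^ 2 := by
        have : |x| ^ 4 = (x ^ 2) ^ 2 := by
          rw [← sq_abs x]
          ring
        rw [this, hx2, div_pow]
        ring_nf
      calc |Real.cos x - (1 - x ^ 2 / 2)| * t ≤ |x| ^ 4 * (5 / 96) * t := by
            exact mul_le_mul_of_nonneg_right hb ht0.le
        _ = (5 * c ^ 4 / 96) / t := by
            rw [hx4]
            field_simp
    · exact Tendsto.div_atTop tendsto_const_nhds tendsto_id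
  have : Tendsto (fun t => E t - c ^ 2 / 2) atTop (𝓝 (0 - c ^ 2 / 2)) :=
    hE0.sub_const _
  rw [zero_sub, ← neg_div] at this
  refine this.congr fun t => by rw [hE]; ring
  
lemma summable_abs_sq (hvar : Summable fun z : Fin d → ℤ => (∑ i, ((z i : ℝ)) ^ 2) * a z)
    (u : Fin d → ℝ) : Summable fun z : Fin d → ℤ => |a z| * (dz z u) ^ 2 := by
  refine Summable.of_norm_bounded ((summable_var' hvar).mul_right (∑ i, (u i) ^ 2))
    fun z => ?_
  rw [Real.norm_eq_abs, abs_mul, abs_abs, abs_of_nonneg (sq_nonneg (dz z u)), mul_assoc]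
  exact mul_le_mul_of_nonneg_left (dz_sq_le z u) (abs_nonneg _)

lemma phi_scaled_tendsto (hsum : HasSum a 0)
    (hvar : Summable fun z : Fin d → ℤ => (∑ i, ((z i : ℝ)) ^ 2) * a z) (u : Fin d → ℝ) :
    Tendsto (fun t : ℝ => phiSymb d a ((Real.sqrt t)⁻¹ • u) * t) atTop
      (𝓝 (-(∑' z : Fin d → ℤ, a z * (dz z u) ^ 2) / 2)) := by
  have heq : (fun t : ℝ => phiSymb d a ((Real.sqrt t)⁻¹ • u) * t)
      = fun t => ∑' z : Fin d → ℤ,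
          a z * ((Real.cos ((Real.sqrt t)⁻¹ * dz z u) - 1) * t) := by
    funext t
    rw [phi_eq hsum, ← tsum_mul_right]
    refine tsum_congr fun z => ?_
    rw [dz_smul]
    ring
  rw [heq]
  have htarget : -(∑' z : Fin d → ℤ, a z * (dz z u) ^ 2) / 2
      = ∑' z : Fin d → ℤ, a z * (-((dz z u) ^ 2) / 2) := by
    rw [eq_comm]
    calc ∑' z : Fin d → ℤ, a z * (-((dz z u) ^ 2) / 2)
        = ∑' z : Fin d → ℤ, -(a z * (dz z u) ^ 2) / 2 := tsum_congr fun z => by ring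
      _ = (∑' z : Fin d → ℤ, -(a z * (dz z u) ^ 2)) / 2 := by rw [tsum_div_const]
      _ = -(∑' z : Fin d → ℤ, a z * (dz z u) ^ 2) / 2 := by rw [tsum_neg]
  rw [htarget]
  refine tendsto_tsum_of_dominated_convergence
    (bound := fun z : Fin d → ℤ => |a z| * (dz z u) ^ 2 / 2)
    ((summable_abs_sq hvar u).div_const 2) (fun z => ?_) ?_
  · exact (key_limit (dz z u)).const_mul (a z)
  · filter_upwards [eventually_ge_atTop (1 : ℝ)] with t ht z
    have ht0 : (0:ℝ) < t := by linarith
    have hx2 : ((Real.sqrt t)⁻¹ * dz z u) ^ 2 = (dz z u) ^ 2 / t := by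
      rw [mul_pow, inv_pow, Real.sq_sqrt ht0.le]
      ring
    rw [Real.norm_eq_abs, abs_mul, abs_mul, abs_of_pos ht0]
    calc |a z| * (|Real.cos ((Real.sqrt t)⁻¹ * dz z u) - 1| * t)
        ≤ |a z| * ((((Real.sqrt t)⁻¹ * dz z u) ^ 2 / 2) * t) := by
          apply mul_le_mul_of_nonneg_left _ (abs_nonneg _)
          exact mul_le_mul_of_nonneg_right (abs_cos_sub_one_le _) ht0.le
      _ = |a z| * (dz z u) ^ 2 / 2 := by
          rw [hx2]
          field_simp

end LLT

namespace LLT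

variable {d : ℕ} {a : (Fin d → ℤ) → ℝ}

lemma bound_integrable {c : ℝ} (hc : 0 < c) :
    Integrable (fun u : Fin d → ℝ => Real.exp (-c * ∑ i, (u i) ^ 2)) := by
  have h1 : (fun u : Fin d → ℝ => Real.exp (-c * ∑ i, (u i) ^ 2))
      = fun u : Fin d → ℝ => ∏ i, Real.exp (-c * (u i) ^ 2) := by
    funext u
    rw [← Real.exp_sum, Finset.mul_sum]
  rw [h1]
  exact Integrable.fintype_prod (f := fun _ : Fin d => fun x : ℝ => Real.exp (-c * x ^ 2))
    fun _ => integrable_exp_neg_mul_sq hc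

lemma main_integral_tendsto (hd : 1 ≤ d) (hsum : HasSum a 0)
    (hpos : ∀ z : Fin d → ℤ, z ≠ 0 → 0 ≤ a z)
    (hvar : Summable fun z : Fin d → ℤ => (∑ i, ((z i : ℝ)) ^ 2) * a z)
    (hirr : AddSubgroup.closure {z : Fin d → ℤ | 0 < a z} = ⊤)
    (w : Fin d → ℝ) :
    Tendsto (fun t : ℝ => ∫ u : Fin d → ℝ,
        Set.indicator (Set.Icc (fun _ : Fin d => -π) (fun _ : Fin d => π))
          (fun θ => Real.exp (phiSymb d a θ * t) * Real.cos (∑ i, θ i * w i))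
          ((Real.sqrt t)⁻¹ • u)) atTop
      (𝓝 (Real.sqrt (2 * π) ^ d / Real.sqrt |(hessPhi d a).det|)) := by
  obtain ⟨c, hc, hcb⟩ := phi_quad_bound hd hsum hpos hirr
  have hQ : (Qmat d a).PosDef := Qmat_posDef hpos hvar hirr
  rw [← integral_gauss_quad hQ]
  refine tendsto_integral_filter_of_dominated_convergence
    (fun u : Fin d → ℝ => Real.exp (-c * ∑ i, (u i) ^ 2)) ?_ ?_ (bound_integrable hc) ?_
  · -- measurability
    filter_upwards with t
    have hfc : Continuous fun θ : Fin d → ℝ =>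
        Real.exp (phiSymb d a θ * t) * Real.cos (∑ i, θ i * w i) := by
      apply Continuous.mul
      · exact Real.continuous_exp.comp ((continuous_phi hsum).mul continuous_const)
      · exact Real.continuous_cos.comp
          (continuous_finset_sum _ fun i _ => (continuous_apply i).mul continuous_const)
    have hmeas : Measurable (Set.indicator
        (Set.Icc (fun _ : Fin d => -π) (fun _ : Fin d => π))
        (fun θ => Real.exp (phiSymb d a θ * t) * Real.cos (∑ i, θ i * w i))) :=
      hfc.measurable.indicator measurableSet_Icc
    exact (hmeas.comp (continuous_const_smul ((Real.sqrt t)⁻¹)).measurable).aestronglyMeasurable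
  · -- the bound
    filter_upwards [eventually_ge_atTop (1 : ℝ)] with t ht
    refine ae_of_all _ fun u => ?_
    have ht0 : (0:ℝ) < t := by linarith
    by_cases hmem : (Real.sqrt t)⁻¹ • u
        ∈ Set.Icc (fun _ : Fin d => -π) (fun _ : Fin d => π)
    · rw [Set.indicator_of_mem hmem]
      have hφ := hcb _ hmem
      have hsq : ∑ i, (((Real.sqrt t)⁻¹ • u) i) ^ 2 = (∑ i, (u i) ^ 2) / t := by
        rw [Finset.sum_div]
        refine Finset.sum_congr rfl fun i _ => ?_
        simp only [Pi.smul_apply, smul_eq_mul, mul_pow, inv_pow, Real.sq_sqrt ht0.le]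
        ring
      have h1 : phiSymb d a ((Real.sqrt t)⁻¹ • u) * t ≤ -c * ∑ i, (u i) ^ 2 := by
        have := mul_le_mul_of_nonneg_right hφ ht0.le
        rw [hsq] at this
        calc phiSymb d a ((Real.sqrt t)⁻¹ • u) * t
            ≤ -c * ((∑ i, (u i) ^ 2) / t) * t := this
          _ = -c * ∑ i, (u i) ^ 2 := by field_simp
      rw [Real.norm_eq_abs, abs_mul]
      calc |Real.exp (phiSymb d a ((Real.sqrt t)⁻¹ • u) * t)|
            * |Real.cos (∑ i, ((Real.sqrt t)⁻¹ • u) i * w i)|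
          ≤ |Real.exp (phiSymb d a ((Real.sqrt t)⁻¹ • u) * t)| * 1 := by
            exact mul_le_mul_of_nonneg_left (Real.abs_cos_le_one _) (abs_nonneg _)
        _ = Real.exp (phiSymb d a ((Real.sqrt t)⁻¹ • u) * t) := by
            rw [mul_one, abs_of_pos (Real.exp_pos _)]
        _ ≤ Real.exp (-c * ∑ i, (u i) ^ 2) := Real.exp_le_exp.mpr h1
    · rw [Set.indicator_of_notMem hmem]
      simp only [norm_zero]
      positivity
  · -- pointwise convergence
    refine ae_of_all _ fun u => ?_
    have hBdot : ∑' z : Fin d → ℤ, a z * (dz z u) ^ 2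
        = dotProduct u ((Qmat d a).mulVec u) := B_eq_dot hvar u
    have hsqrt : Tendsto Real.sqrt atTop atTop := by
      apply tendsto_atTop_atTop.mpr
      intro b
      refine ⟨(max b 0) ^ 2, fun x hx => ?_⟩
      have h1 : max b 0 ≤ Real.sqrt x := by
        rw [← Real.sqrt_sq (le_max_right b 0)]
        exact Real.sqrt_le_sqrt hx
      exact le_trans (le_max_left b 0) h1
    have hinv : Tendsto (fun t : ℝ => (Real.sqrt t)⁻¹) atTop (𝓝 0) :=
      hsqrt.inv_tendsto_atTop
    have hmemev : ∀ᶠ t : ℝ in atTop, ((Real.sqrt t)⁻¹ • u)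
        ∈ Set.Icc (fun _ : Fin d => -π) (fun _ : Fin d => π) := by
      have hnb : ∀ᶠ x : ℝ in 𝓝 (0:ℝ), |x| ≤ π := by
        filter_upwards [Metric.ball_mem_nhds (0:ℝ) Real.pi_pos] with x hx
        rw [Metric.mem_ball, Real.dist_eq, sub_zero] at hx
        linarith
      have hi : ∀ i : Fin d, ∀ᶠ t : ℝ in atTop, |(Real.sqrt t)⁻¹ * u i| ≤ π := by
        intro i
        have h2 : Tendsto (fun t : ℝ => (Real.sqrt t)⁻¹ * u i) atTop (𝓝 0) := by
          simpa using hinv.mul_const (u i)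
        exact h2.eventually hnb
      filter_upwards [(Filter.eventually_all (ι := Fin d)).mpr hi] with t ht
      rw [mem_Icc_pi]
      intro i
      have h3 := abs_le.mp (ht i)
      constructor
      · simpa using h3.1
      · simpa using h3.2
    have hexp : Tendsto (fun t : ℝ => Real.exp (phiSymb d a ((Real.sqrt t)⁻¹ • u) * t))
        atTop (𝓝 (Real.exp (-(dotProduct u ((Qmat d a).mulVec u)) / 2))) := by
      have h4 := phi_scaled_tendsto hsum hvar u
      rw [hBdot] at h4
      exact (Real.continuous_exp.tendsto _).comp h4
    have hcos : Tendsto (fun t : ℝ => Real.cos (∑ i, ((Real.sqrt t)⁻¹ • u) i * w i))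
        atTop (𝓝 1) := by
      have h1 : (fun t : ℝ => ∑ i, ((Real.sqrt t)⁻¹ • u) i * w i)
          = fun t : ℝ => (Real.sqrt t)⁻¹ * ∑ i, u i * w i := by
        funext t
        rw [Finset.mul_sum]
        refine Finset.sum_congr rfl fun i _ => ?_
        simp only [Pi.smul_apply, smul_eq_mul]
        ring
      have h2 : Tendsto (fun t : ℝ => (Real.sqrt t)⁻¹ * ∑ i, u i * w i) atTop (𝓝 0) := by
        simpa using hinv.mul_const (∑ i, u i * w i)
      have h3 : Tendsto (fun t : ℝ => ∑ i, ((Real.sqrt t)⁻¹ • u) i * w i) atTop (𝓝 0) := by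
        rw [h1]; exact h2
      have h5 := (Real.continuous_cos.tendsto (0:ℝ)).comp h3
      simpa [Function.comp_def] using h5
    have hprod := hexp.mul hcos
    rw [mul_one] at hprod
    refine Tendsto.congr' ?_ hprod
    filter_upwards [hmemev] with t hmem
    exact (Set.indicator_of_mem hmem
      fun θ => Real.exp (phiSymb d a θ * t) * Real.cos (∑ i, θ i * w i)).symm

lemma scaled_eq (hsum : HasSum a 0) {t : ℝ} (ht : 1 ≤ t) (x y : Fin d → ℤ) :
    t ^ ((d : ℝ) / 2) * ptrans d a t x y
      = ((2 * π) ^ d)⁻¹ * ∫ u : Fin d → ℝ,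
          Set.indicator (Set.Icc (fun _ : Fin d => -π) (fun _ : Fin d => π))
            (fun θ => Real.exp (phiSymb d a θ * t)
              * Real.cos (∑ i, θ i * ((y i : ℝ) - (x i : ℝ))))
            ((Real.sqrt t)⁻¹ • u) := by
  have ht0 : (0:ℝ) < t := by linarith
  set f : (Fin d → ℝ) → ℝ := Set.indicator
      (Set.Icc (fun _ : Fin d => -π) (fun _ : Fin d => π))
      (fun θ => Real.exp (phiSymb d a θ * t)
        * Real.cos (∑ i, θ i * ((y i : ℝ) - (x i : ℝ)))) with hf
  have hcv : ∫ u : Fin d → ℝ, f ((Real.sqrt t)⁻¹ • u)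
      = (Real.sqrt t) ^ (Module.finrank ℝ (Fin d → ℝ)) • ∫ u, f u :=
    Measure.integral_comp_inv_smul_of_nonneg (volume : Measure (Fin d → ℝ)) f (Real.sqrt_nonneg t)
  have hrank : Module.finrank ℝ (Fin d → ℝ) = d := by
    rw [Module.finrank_fintype_fun_eq_card, Fintype.card_fin]
  have hind : ∫ u, f u = ∫ θ in Set.Icc (fun _ : Fin d => -π) (fun _ : Fin d => π),
      Real.exp (phiSymb d a θ * t) * Real.cos (∑ i, θ i * ((y i : ℝ) - (x i : ℝ))) := by
    rw [hf, integral_indicator measurableSet_Icc]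
  have hpow : (Real.sqrt t) ^ d = t ^ ((d : ℝ) / 2) := by
    rw [Real.sqrt_eq_rpow, ← Real.rpow_natCast (t ^ ((1:ℝ)/2)) d, ← Real.rpow_mul ht0.le]
    congr 1
    ring
  rw [hcv, hrank, hind, hpow, smul_eq_mul, ptrans]
  ring

lemma const_val :
    ((2 * π) ^ d : ℝ)⁻¹ * (Real.sqrt (2 * π) ^ d / Real.sqrt |(hessPhi d a).det|)
      = gammaConst d a := by
  have hP : (0:ℝ) < 2 * π := by positivity
  have h1 : Real.sqrt (2 * π) ^ d = (2 * π) ^ ((d:ℝ) / 2) := by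
    rw [Real.sqrt_eq_rpow, ← Real.rpow_natCast ((2 * π) ^ ((1:ℝ)/2)) d,
      ← Real.rpow_mul hP.le]
    congr 1
    ring
  have h2 : ((2 * π) ^ d : ℝ) = (2 * π) ^ ((d:ℝ)) := (Real.rpow_natCast _ _).symm
  rw [gammaConst, h1, h2, div_eq_mul_inv, ← mul_assoc]
  congr 1
  rw [← Real.rpow_neg hP.le, ← Real.rpow_neg hP.le, ← Real.rpow_add hP]
  congr 1
  ring

end LLT

/-- Local limit theorem: `p(t;x,y) ~ γ_d t^{-d/2}` as `t → ∞`. -/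
theorem ptrans_asymptotic
    (d : ℕ) (hd : 1 ≤ d) (a : (Fin d → ℤ) → ℝ)
    (hpos : ∀ z : Fin d → ℤ, z ≠ 0 → 0 ≤ a z)
    (hneg : a 0 < 0)
    (hsymm : ∀ z : Fin d → ℤ, a (-z) = a z)
    (hsum : HasSum a 0)
    (hvar : Summable fun z : Fin d → ℤ => (∑ i, ((z i : ℝ)) ^ 2) * a z)
    (hirr : AddSubgroup.closure {z : Fin d → ℤ | 0 < a z} = ⊤)
    (x y : Fin d → ℤ) :
    Tendsto (fun t : ℝ => t ^ ((d : ℝ) / 2) * ptrans d a t x y) atTop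
      (𝓝 (gammaConst d a)) := by
  have hmain := LLT.main_integral_tendsto hd hsum hpos hvar hirr
      (fun i => (y i : ℝ) - (x i : ℝ))
  have hconst := hmain.const_mul (((2 * π) ^ d : ℝ)⁻¹)
  rw [LLT.const_val (a := a)] at hconst
  refine Tendsto.congr' ?_ hconst
  filter_upwards [eventually_ge_atTop (1 : ℝ)] with t ht
  exact (LLT.scaled_eq hsum ht x y).symm
end

section
/- If d ≥ 3, then for all x, y ∈ ℤ^d the Green's function is finite: G_0(x, y) := ∫_0^∞ p(t; x, y) dt < ∞ (the integral converges). -/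
open MeasureTheory Real Filter Topology Asymptotics

section Aux
variable {d : ℕ} {a : (Fin d → ℤ) → ℝ}

/-- The nonnegative symbol `F θ = ∑' z, a z * (1 - cos⟨z,θ⟩)`. -/
noncomputable def Fsym (d : ℕ) (a : (Fin d → ℤ) → ℝ) (θ : Fin d → ℝ) : ℝ :=
  ∑' z : Fin d → ℤ, a z * (1 - Real.cos (∑ i, (z i : ℝ) * θ i))

lemma summable_F (ha : Summable a) (θ : Fin d → ℝ) :
    Summable (fun z : Fin d → ℤ => a z * (1 - Real.cos (∑ i, (z i : ℝ) * θ i))) := by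
  apply Summable.of_norm_bounded (g := fun z => |a z| * 2) (ha.abs.mul_right 2)
  intro z
  rw [norm_mul, Real.norm_eq_abs, Real.norm_eq_abs]
  gcongr
  have h1 := Real.neg_one_le_cos (∑ i, (z i : ℝ) * θ i)
  have h2 := Real.cos_le_one (∑ i, (z i : ℝ) * θ i)
  rw [abs_le]; constructor <;> linarith

lemma phi_eq_neg_F (ha : HasSum a 0) (θ : Fin d → ℝ) :
    phiSymb d a θ = - Fsym d a θ := by
  have hs := summable_F ha.summable θ
  have : ∀ z : Fin d → ℤ, a z * Real.cos (∑ i, (z i : ℝ) * θ i)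
      = a z - a z * (1 - Real.cos (∑ i, (z i : ℝ) * θ i)) := by intro z; ring
  rw [phiSymb, tsum_congr this, ha.summable.tsum_sub hs, ha.tsum_eq, Fsym]
  ring

lemma F_term_nonneg (hpos : ∀ z : Fin d → ℤ, z ≠ 0 → 0 ≤ a z) (hneg : a 0 < 0) :
    ∀ (θ : Fin d → ℝ) (z : Fin d → ℤ),
      0 ≤ a z * (1 - Real.cos (∑ i, (z i : ℝ) * θ i)) := by
  intro θ z
  by_cases hz : z = 0
  · subst hz; simp
  · exact mul_nonneg (hpos z hz) (by linarith [Real.cos_le_one (∑ i, (z i : ℝ) * θ i)])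

lemma F_nonneg (hpos : ∀ z : Fin d → ℤ, z ≠ 0 → 0 ≤ a z) (hneg : a 0 < 0)
    (θ : Fin d → ℝ) : 0 ≤ Fsym d a θ :=
  tsum_nonneg (F_term_nonneg hpos hneg θ)

lemma F_continuous (ha : Summable a) : Continuous (Fsym d a) := by
  apply continuous_tsum (u := fun z => |a z| * 2)
  · intro z
    exact (continuous_const.mul ((continuous_const.sub
      (Real.continuous_cos.comp (continuous_finset_sum _
        (fun i _ => (continuous_const.mul (continuous_apply i))))))))
  · exact ha.abs.mul_right 2
  · intro z θ
    rw [norm_mul, Real.norm_eq_abs, Real.norm_eq_abs]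
    gcongr
    have h1 := Real.neg_one_le_cos (∑ i, (z i : ℝ) * θ i)
    have h2 := Real.cos_le_one (∑ i, (z i : ℝ) * θ i)
    rw [abs_le]; constructor <;> linarith

end Aux
section T
variable {d : ℕ} {a : (Fin d → ℤ) → ℝ}

/-- cast hom ℤ^d →+ ℝ^d -/
def castHom (d : ℕ) : (Fin d → ℤ) →+ (Fin d → ℝ) where
  toFun z i := (z i : ℝ)
  map_zero' := by ext i; simp
  map_add' z w := by ext i; push_cast; simp

/-- pairing hom z ↦ ⟨z,θ⟩ -/
def pairHom (d : ℕ) (θ : Fin d → ℝ) : (Fin d → ℤ) →+ ℝ where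
  toFun z := ∑ i, (z i : ℝ) * θ i
  map_zero' := by simp
  map_add' z w := by
    show (∑ i, ((z + w) i : ℝ) * θ i) = _
    rw [← Finset.sum_add_distrib]
    apply Finset.sum_congr rfl; intro i _
    push_cast [Pi.add_apply]; ring

lemma F_pos (hpos : ∀ z : Fin d → ℤ, z ≠ 0 → 0 ≤ a z) (hneg : a 0 < 0)
    (ha : Summable a)
    (hirr : AddSubgroup.closure {z : Fin d → ℤ | 0 < a z} = ⊤)
    {θ : Fin d → ℝ} (hθS : θ ∈ Set.Icc (fun _ : Fin d => -π) (fun _ : Fin d => π))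
    (hθ : θ ≠ 0) : 0 < Fsym d a θ := by
  rcases lt_or_eq_of_le (F_nonneg hpos hneg θ) with h | h
  · exact h
  exfalso
  -- every term is zero
  have hterm : ∀ z : Fin d → ℤ, 0 < a z → Real.cos (∑ i, (z i : ℝ) * θ i) = 1 := by
    intro z hz
    have hle := (summable_F ha θ).le_tsum z (fun w _ => F_term_nonneg hpos hneg θ w)
    rw [← Fsym, ← h] at hle
    have h0 := F_term_nonneg hpos hneg θ z
    have : a z * (1 - Real.cos (∑ i, (z i : ℝ) * θ i)) = 0 := le_antisymm hle h0
    have := (mul_eq_zero.1 this).resolve_left (ne_of_gt hz)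
    linarith
  -- the subgroup where pairing lands in 2πℤ
  set H : AddSubgroup (Fin d → ℤ) :=
    AddSubgroup.comap (pairHom d θ) (AddSubgroup.zmultiples (2 * π)) with hH
  have hTH : {z : Fin d → ℤ | 0 < a z} ⊆ (H : Set (Fin d → ℤ)) := by
    intro z hz
    obtain ⟨n, hn⟩ := (Real.cos_eq_one_iff _).1 (hterm z hz)
    exact ⟨n, by simpa [pairHom] using hn⟩
  have hHtop : H = ⊤ := top_unique (hirr ▸ AddSubgroup.closure_le H |>.2 hTH)
  -- each coordinate of θ is a multiple of 2π
  have hcoord : ∀ i : Fin d, θ i = 0 := by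
    intro i
    have hmem : (Pi.single i 1 : Fin d → ℤ) ∈ H := hHtop ▸ AddSubgroup.mem_top _
    obtain ⟨n, hn⟩ := hmem
    have hpair : pairHom d θ (Pi.single i 1) = θ i := by
      simp only [pairHom, AddMonoidHom.coe_mk, ZeroHom.coe_mk]
      rw [Finset.sum_eq_single i]
      · simp
      · intro j _ hj; simp [Pi.single_apply, hj]
      · simp
    rw [hpair] at hn
    simp only [zsmul_eq_mul] at hn
    have h1 : -π ≤ θ i := hθS.1 i
    have h2 : θ i ≤ π := hθS.2 i
    have hπ := Real.pi_pos
    rcases lt_trichotomy n 0 with hn0 | hn0 | hn0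
    · exfalso
      have : (n : ℝ) ≤ -1 := by exact_mod_cast (by omega : n ≤ -1)
      nlinarith
    · subst hn0; simpa using hn.symm
    · exfalso
      have : (1 : ℝ) ≤ (n : ℝ) := by exact_mod_cast hn0
      nlinarith
  exact hθ (funext hcoord)

end T

section Span
variable {d : ℕ} {a : (Fin d → ℤ) → ℝ}

lemma span_top_of_singles (p : Submodule ℝ (Fin d → ℝ))
    (h : ∀ i : Fin d, (Pi.single i (1:ℝ) : Fin d → ℝ) ∈ p) : p = ⊤ := by
  rw [Submodule.eq_top_iff']
  intro v
  have hv : v = ∑ i : Fin d, v i • (Pi.single i (1:ℝ) : Fin d → ℝ) := by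
    funext j
    rw [Finset.sum_apply]
    rw [Finset.sum_eq_single j]
    · simp
    · intro i _ hij; simp [Pi.single_apply, Ne.symm hij]
    · simp
  rw [hv]
  exact Submodule.sum_mem p (fun i _ => Submodule.smul_mem p _ (h i))

lemma cast_single (i : Fin d) : castHom d (Pi.single i (1:ℤ)) = Pi.single i (1:ℝ) := by
  funext j
  by_cases h : j = i
  · subst h; simp [castHom]
  · simp [castHom, Pi.single_apply, h]

lemma exists_spanning_finset
    (hirr : AddSubgroup.closure {z : Fin d → ℤ | 0 < a z} = ⊤) :
    ∃ Z : Finset (Fin d → ℤ), (∀ z ∈ Z, 0 < a z) ∧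
      Submodule.span ℝ (castHom d '' Z) = ⊤ := by
  classical
  set T : Set (Fin d → ℤ) := {z | 0 < a z} with hT
  -- each basis vector is in the span of the image of T
  have hsingle : ∀ i : Fin d, (Pi.single i (1:ℝ) : Fin d → ℝ)
      ∈ Submodule.span ℝ (castHom d '' T) := by
    intro i
    have h1 : (Pi.single i (1:ℤ) : Fin d → ℤ) ∈ AddSubgroup.closure T := by
      rw [hirr]; trivial
    have h2 : castHom d (Pi.single i (1:ℤ))
        ∈ AddSubgroup.map (castHom d) (AddSubgroup.closure T) :=
      AddSubgroup.mem_map_of_mem _ h1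
    rw [AddMonoidHom.map_closure] at h2
    have h3 : AddSubgroup.closure (castHom d '' T)
        ≤ (Submodule.span ℝ (castHom d '' T)).toAddSubgroup :=
      (AddSubgroup.closure_le _).2 Submodule.subset_span
    have := h3 h2
    rwa [cast_single] at this
  -- pick finite subsets
  have hfin : ∀ i : Fin d, ∃ W : Finset (Fin d → ℝ),
      ↑W ⊆ castHom d '' T ∧ (Pi.single i (1:ℝ) : Fin d → ℝ) ∈ Submodule.span ℝ (W : Set (Fin d → ℝ)) := by
    intro i
    obtain ⟨W, hW1, hW2⟩ := Submodule.mem_span_finite_of_mem_span (hsingle i)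
    exact ⟨W, hW1, hW2⟩
  choose W hWsub hWmem using hfin
  set Wall : Finset (Fin d → ℝ) := Finset.univ.biUnion W with hWall
  have hWallsub : ↑Wall ⊆ castHom d '' T := by
    intro w hw
    simp only [hWall, Finset.coe_biUnion, Set.mem_iUnion, Finset.mem_coe] at hw
    obtain ⟨i, _, hi⟩ := hw
    exact hWsub i hi
  -- pull back to ℤ points
  set g : (Fin d → ℝ) → (Fin d → ℤ) :=
    fun w => if h : ∃ z, z ∈ T ∧ castHom d z = w then h.choose else 0 with hg
  refine ⟨Wall.image g, ?_, ?_⟩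
  · intro z hz
    simp only [Finset.mem_image] at hz
    obtain ⟨w, hw, rfl⟩ := hz
    obtain ⟨z', hz', hcast⟩ := hWallsub hw
    have hex : ∃ z, z ∈ T ∧ castHom d z = w := ⟨z', hz', hcast⟩
    simp only [hg, dif_pos hex]
    exact hex.choose_spec.1
  · apply span_top_of_singles
    intro i
    have hsub : (Wall : Set (Fin d → ℝ)) ⊆ castHom d '' ↑(Wall.image g) := by
      intro w hw
      obtain ⟨z', hz', hcast⟩ := hWallsub hw
      have hex : ∃ z, z ∈ T ∧ castHom d z = w := ⟨z', hz', hcast⟩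
      refine ⟨g w, ?_, ?_⟩
      · exact Finset.mem_coe.2 (Finset.mem_image_of_mem g (Finset.mem_coe.1 hw))
      · simp only [hg, dif_pos hex]
        exact hex.choose_spec.2
    refine Submodule.span_mono hsub ?_
    refine Submodule.span_mono ?_ (hWmem i)
    intro w hw
    exact Finset.mem_coe.2 (Finset.mem_biUnion.2 ⟨i, Finset.mem_univ i, Finset.mem_coe.1 hw⟩)

lemma quad_coercive (hd : 1 ≤ d) (Z : Finset (Fin d → ℤ))
    (hspan : Submodule.span ℝ (castHom d '' Z) = ⊤) :
    ∃ c > 0, ∀ θ : Fin d → ℝ,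
      c * ‖θ‖^2 ≤ ∑ z ∈ Z, (∑ i, (z i : ℝ) * θ i)^2 := by
  haveI : Nonempty (Fin d) := ⟨⟨0, by omega⟩⟩
  set Q : (Fin d → ℝ) → ℝ := fun θ => ∑ z ∈ Z, (∑ i, (z i : ℝ) * θ i)^2 with hQ
  have hQcont : Continuous Q := by
    apply continuous_finset_sum
    intro z _
    exact (continuous_finset_sum _ (fun i _ => continuous_const.mul (continuous_apply i))).pow 2
  have hQnonneg : ∀ θ, 0 ≤ Q θ := fun θ => Finset.sum_nonneg (fun z _ => sq_nonneg _)
  have hQpos : ∀ θ : Fin d → ℝ, θ ≠ 0 → 0 < Q θ := by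
    intro θ hθ
    rcases lt_or_eq_of_le (hQnonneg θ) with h | h
    · exact h
    exfalso
    have hzero : ∀ z ∈ Z, (∑ i, (z i : ℝ) * θ i) = 0 := by
      intro z hz
      have := (Finset.sum_eq_zero_iff_of_nonneg (fun w _ => sq_nonneg _)).1 h.symm z hz
      exact pow_eq_zero_iff (two_ne_zero) |>.1 this
    set L : (Fin d → ℝ) →ₗ[ℝ] ℝ :=
      { toFun := fun v => ∑ i, v i * θ i
        map_add' := by
          intro v w
          simp only [Pi.add_apply, add_mul]
          exact Finset.sum_add_distrib
        map_smul' := by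
          intro c v
          simp only [Pi.smul_apply, smul_eq_mul, RingHom.id_apply, Finset.mul_sum]
          exact Finset.sum_congr rfl (fun i _ => by ring) } with hL
    have hker : castHom d '' ↑Z ⊆ (LinearMap.ker L : Set (Fin d → ℝ)) := by
      rintro w ⟨z, hz, rfl⟩
      simpa [hL, castHom] using hzero z hz
    have : (⊤ : Submodule ℝ (Fin d → ℝ)) ≤ LinearMap.ker L := by
      rw [← hspan]; exact Submodule.span_le.2 hker
    have hLθ : L θ = 0 := this (Submodule.mem_top)
    have : ∑ i, θ i * θ i = 0 := hLθ
    have hall : ∀ i : Fin d, θ i = 0 := by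
      intro i
      have := (Finset.sum_eq_zero_iff_of_nonneg
        (fun j _ => mul_self_nonneg (θ j))).1 this i (Finset.mem_univ i)
      exact mul_self_eq_zero.1 this
    exact hθ (funext hall)
  -- min on sphere
  have hsphere : (Metric.sphere (0 : Fin d → ℝ) 1).Nonempty :=
    NormedSpace.sphere_nonempty.2 zero_le_one
  obtain ⟨u, huS, hmin⟩ := (isCompact_sphere (0 : Fin d → ℝ) 1).exists_isMinOn
    hsphere hQcont.continuousOn
  have hu1 : ‖u‖ = 1 := by simpa using huS
  have hu0 : u ≠ 0 := by intro h; rw [h] at hu1; simp at hu1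
  refine ⟨Q u, hQpos u hu0, ?_⟩
  intro θ
  by_cases hθ : θ = 0
  · subst hθ; simp [hQ]
  · have hn : 0 < ‖θ‖ := norm_pos_iff.2 hθ
    set v : Fin d → ℝ := ‖θ‖⁻¹ • θ with hv
    have hvS : v ∈ Metric.sphere (0 : Fin d → ℝ) 1 := by
      simp [hv, norm_smul, abs_of_pos (inv_pos.2 hn), inv_mul_cancel₀ hn.ne']
    have hQscale : Q θ = ‖θ‖^2 * Q v := by
      rw [hQ]
      simp only [Finset.mul_sum]
      apply Finset.sum_congr rfl
      intro z _
      have : ∀ i : Fin d, (z i : ℝ) * θ i = ‖θ‖ * ((z i : ℝ) * v i) := by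
        intro i
        simp [hv, Pi.smul_apply, smul_eq_mul]
        field_simp
      rw [Finset.sum_congr rfl (fun i _ => this i), ← Finset.mul_sum]
      ring
    have := hmin hvS
    calc Q u * ‖θ‖^2 ≤ Q v * ‖θ‖^2 := by
          apply mul_le_mul_of_nonneg_right this (sq_nonneg _)
      _ = Q θ := by rw [hQscale]; ring

end Span

section Lower
variable {d : ℕ} {a : (Fin d → ℤ) → ℝ}

lemma F_lower (hd : 1 ≤ d)
    (hpos : ∀ z : Fin d → ℤ, z ≠ 0 → 0 ≤ a z) (hneg : a 0 < 0)
    (ha : HasSum a 0)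
    (hirr : AddSubgroup.closure {z : Fin d → ℤ | 0 < a z} = ⊤) :
    ∃ c > 0, ∀ θ ∈ Set.Icc (fun _ : Fin d => -π) (fun _ : Fin d => π),
      c * ‖θ‖^2 ≤ Fsym d a θ := by
  classical
  have hπ := Real.pi_pos
  obtain ⟨Z, hZT, hZspan⟩ := exists_spanning_finset hirr
  obtain ⟨c1, hc1, hcoer⟩ := quad_coercive hd Z hZspan
  have hZne : Z.Nonempty := by
    rcases Finset.eq_empty_or_nonempty Z with h | h
    · exfalso
      rw [h] at hZspan
      simp only [Finset.coe_empty, Set.image_empty, Submodule.span_empty] at hZspan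
      haveI : Nonempty (Fin d) := ⟨⟨0, by omega⟩⟩
      have : (Pi.single (⟨0, by omega⟩ : Fin d) (1:ℝ) : Fin d → ℝ) ∈ (⊥ : Submodule ℝ (Fin d → ℝ)) := by
        rw [hZspan]; trivial
      rw [Submodule.mem_bot] at this
      have := congrFun this ⟨0, by omega⟩
      simp at this
    · exact h
  obtain ⟨z0, hz0Z, hz0min⟩ := Finset.exists_min_image Z a hZne
  set amin := a z0 with hamin
  have haminpos : 0 < amin := hZT z0 hz0Z
  -- bound on the pairing
  obtain ⟨zM, hzMZ, hzMmax⟩ := Finset.exists_max_image Z (fun z => ∑ i, |(z i : ℝ)|) hZne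
  set M : ℝ := ∑ i, |(zM i : ℝ)| with hM
  have hM0 : 0 ≤ M := Finset.sum_nonneg (fun i _ => abs_nonneg _)
  have hpair_bound : ∀ z ∈ Z, ∀ θ : Fin d → ℝ, |∑ i, (z i : ℝ) * θ i| ≤ M * ‖θ‖ := by
    intro z hz θ
    calc |∑ i, (z i : ℝ) * θ i| ≤ ∑ i, |(z i : ℝ) * θ i| := Finset.abs_sum_le_sum_abs _ _
      _ ≤ ∑ i, |(z i : ℝ)| * ‖θ‖ := by
          apply Finset.sum_le_sum
          intro i _
          rw [abs_mul]
          exact mul_le_mul_of_nonneg_left (norm_le_pi_norm θ i) (abs_nonneg _)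
      _ = (∑ i, |(z i : ℝ)|) * ‖θ‖ := by rw [Finset.sum_mul]
      _ ≤ M * ‖θ‖ := mul_le_mul_of_nonneg_right (hzMmax z hz) (norm_nonneg _)
  set δ : ℝ := π / (M + 1) with hδ
  have hδpos : 0 < δ := div_pos hπ (by linarith)
  -- near bound
  set cN : ℝ := amin * (2 / π^2) * c1 with hcN
  have hcNpos : 0 < cN := by
    apply mul_pos (mul_pos haminpos _) hc1
    positivity
  have hnear : ∀ θ : Fin d → ℝ, ‖θ‖ ≤ δ → cN * ‖θ‖^2 ≤ Fsym d a θ := by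
    intro θ hθδ
    have hsum_le : ∑ z ∈ Z, a z * (1 - Real.cos (∑ i, (z i : ℝ) * θ i)) ≤ Fsym d a θ :=
      (summable_F ha.summable θ).sum_le_tsum Z (fun z _ => F_term_nonneg hpos hneg θ z)
    have hterm : ∀ z ∈ Z, a z * ((2 / π^2) * (∑ i, (z i : ℝ) * θ i)^2)
        ≤ a z * (1 - Real.cos (∑ i, (z i : ℝ) * θ i)) := by
      intro z hz
      apply mul_le_mul_of_nonneg_left _ (hZT z hz).le
      have habs : |∑ i, (z i : ℝ) * θ i| ≤ π := by
        calc |∑ i, (z i : ℝ) * θ i| ≤ M * ‖θ‖ := hpair_bound z hz θ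
          _ ≤ M * δ := mul_le_mul_of_nonneg_left hθδ hM0
          _ = M * π / (M + 1) := by rw [hδ]; ring
          _ ≤ π := by
              rw [div_le_iff₀ (by linarith)]
              nlinarith
      have := Real.cos_le_one_sub_mul_cos_sq habs
      linarith
    calc cN * ‖θ‖^2 = amin * (2/π^2) * (c1 * ‖θ‖^2) := by rw [hcN]; ring
      _ ≤ amin * (2/π^2) * (∑ z ∈ Z, (∑ i, (z i : ℝ) * θ i)^2) := by
          apply mul_le_mul_of_nonneg_left (hcoer θ)
          positivity
      _ = ∑ z ∈ Z, amin * ((2/π^2) * (∑ i, (z i : ℝ) * θ i)^2) := by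
          rw [Finset.mul_sum]; apply Finset.sum_congr rfl; intro z _; ring
      _ ≤ ∑ z ∈ Z, a z * ((2/π^2) * (∑ i, (z i : ℝ) * θ i)^2) := by
          apply Finset.sum_le_sum
          intro z hz
          apply mul_le_mul_of_nonneg_right (hz0min z hz)
          positivity
      _ ≤ ∑ z ∈ Z, a z * (1 - Real.cos (∑ i, (z i : ℝ) * θ i)) :=
          Finset.sum_le_sum hterm
      _ ≤ Fsym d a θ := hsum_le
  -- far region
  set S : Set (Fin d → ℝ) := Set.Icc (fun _ : Fin d => -π) (fun _ : Fin d => π) with hS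
  have hnormle : ∀ θ ∈ S, ‖θ‖ ≤ π := by
    intro θ hθ
    apply pi_norm_le_iff_of_nonneg hπ.le |>.2
    intro i
    rw [Real.norm_eq_abs, abs_le]
    exact ⟨hθ.1 i, hθ.2 i⟩
  set K : Set (Fin d → ℝ) := S ∩ {θ | δ ≤ ‖θ‖} with hK
  by_cases hKne : K.Nonempty
  · have hKcomp : IsCompact K := IsCompact.inter_right isCompact_Icc
      (isClosed_le continuous_const continuous_norm)
    obtain ⟨θ0, hθ0K, hminF⟩ := hKcomp.exists_isMinOn hKne
      (F_continuous ha.summable).continuousOn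
    have hθ0ne : θ0 ≠ 0 := by
      intro h
      have := hθ0K.2
      rw [h] at this
      simp only [Set.mem_setOf_eq, norm_zero] at this
      linarith
    have hε : 0 < Fsym d a θ0 := F_pos hpos hneg ha.summable hirr hθ0K.1 hθ0ne
    set ε := Fsym d a θ0 with hεdef
    set cF : ℝ := ε / π^2 with hcF
    have hcFpos : 0 < cF := div_pos hε (by positivity)
    refine ⟨min cN cF, lt_min hcNpos hcFpos, ?_⟩
    intro θ hθS
    by_cases hcase : ‖θ‖ ≤ δ
    · calc min cN cF * ‖θ‖^2 ≤ cN * ‖θ‖^2 :=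
            mul_le_mul_of_nonneg_right (min_le_left _ _) (sq_nonneg _)
        _ ≤ Fsym d a θ := hnear θ hcase
    · push_neg at hcase
      have hθK : θ ∈ K := ⟨hθS, hcase.le⟩
      calc min cN cF * ‖θ‖^2 ≤ cF * ‖θ‖^2 :=
            mul_le_mul_of_nonneg_right (min_le_right _ _) (sq_nonneg _)
        _ ≤ cF * π^2 := by
            apply mul_le_mul_of_nonneg_left _ hcFpos.le
            have := hnormle θ hθS
            nlinarith [norm_nonneg θ]
        _ = ε := by rw [hcF]; field_simp
        _ ≤ Fsym d a θ := hminF hθK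
  · refine ⟨cN, hcNpos, ?_⟩
    intro θ hθS
    apply hnear
    by_contra hcon
    push_neg at hcon
    exact hKne ⟨θ, hθS, hcon.le⟩

end Lower

section NormInt

lemma lintegral_inv_norm_sq_lt_top {d : ℕ} (hd3 : 3 ≤ d) :
    ∫⁻ θ in Set.Icc (fun _ : Fin d => -π) (fun _ : Fin d => π),
      ENNReal.ofReal ((‖θ‖^2)⁻¹) < ⊤ := by
  have hπ := Real.pi_pos
  set S : Set (Fin d → ℝ) := Set.Icc (fun _ : Fin d => -π) (fun _ : Fin d => π) with hS
  set μ : Measure (Fin d → ℝ) := volume.restrict S with hμ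
  have hVS : volume S < ⊤ := (isCompact_Icc).measure_lt_top
  have hmble : AEMeasurable (fun θ : Fin d → ℝ => (‖θ‖^2)⁻¹) μ :=
    ((measurable_norm.pow_const 2).inv).aemeasurable
  have hnn : 0 ≤ᵐ[μ] (fun θ : Fin d → ℝ => (‖θ‖^2)⁻¹) :=
    Filter.Eventually.of_forall (fun θ => by positivity)
  rw [lintegral_eq_lintegral_meas_lt μ hnn hmble]
  -- bound the measure of superlevel sets
  have hb1 : ∀ t : ℝ, μ {θ : Fin d → ℝ | t < (‖θ‖^2)⁻¹} ≤ volume S := by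
    intro t
    calc μ _ ≤ μ Set.univ := measure_mono (Set.subset_univ _)
      _ = volume S := by rw [hμ, Measure.restrict_apply_univ]
  have hb2 : ∀ t : ℝ, 0 < t → μ {θ : Fin d → ℝ | t < (‖θ‖^2)⁻¹}
      ≤ ENNReal.ofReal ((2 * (Real.sqrt t)⁻¹)^d) := by
    intro t ht
    have hrt : 0 < (Real.sqrt t)⁻¹ := inv_pos.2 (Real.sqrt_pos.2 ht)
    have hsub : {θ : Fin d → ℝ | t < (‖θ‖^2)⁻¹} ⊆ Metric.ball (0 : Fin d → ℝ) (Real.sqrt t)⁻¹ := by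
      intro θ hθ
      simp only [Set.mem_setOf_eq] at hθ
      have hθ0 : θ ≠ 0 := by
        intro h; rw [h] at hθ; simp at hθ; linarith
      have hn : 0 < ‖θ‖ := norm_pos_iff.2 hθ0
      have hsq : ‖θ‖^2 < t⁻¹ := by
        have h1 : 0 < ‖θ‖^2 := by positivity
        have h2 : t * ‖θ‖^2 < 1 := by
          calc t * ‖θ‖^2 < (‖θ‖^2)⁻¹ * ‖θ‖^2 := by
                apply mul_lt_mul_of_pos_right hθ h1
            _ = 1 := inv_mul_cancel₀ h1.ne'
        have h3 := mul_lt_mul_of_pos_left h2 (inv_pos.2 ht)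
        rw [mul_one] at h3
        calc ‖θ‖^2 = t⁻¹ * (t * ‖θ‖^2) := by field_simp
          _ < t⁻¹ := h3
      have hinv : t⁻¹ = ((Real.sqrt t)⁻¹)^2 := by
        rw [inv_pow, Real.sq_sqrt ht.le]
      rw [hinv] at hsq
      have := lt_of_pow_lt_pow_left₀ 2 hrt.le hsq
      simpa [Metric.mem_ball, dist_zero_right] using this
    calc μ _ ≤ volume (Metric.ball (0 : Fin d → ℝ) (Real.sqrt t)⁻¹) := by
          rw [hμ]
          exact le_trans (Measure.restrict_le_self _) (measure_mono hsub)
      _ = ENNReal.ofReal ((2 * (Real.sqrt t)⁻¹)^d) := by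
          rw [Real.volume_pi_ball 0 hrt, Fintype.card_fin]
  -- split the t-integral
  have hsplit : Set.Ioi (0:ℝ) = Set.Ioc (0:ℝ) 1 ∪ Set.Ioi (1:ℝ) :=
    (Set.Ioc_union_Ioi_eq_Ioi zero_le_one).symm
  rw [hsplit, lintegral_union measurableSet_Ioi Set.Ioc_disjoint_Ioi_same]
  have hpart1 : ∫⁻ t in Set.Ioc (0:ℝ) 1, μ {θ : Fin d → ℝ | t < (‖θ‖^2)⁻¹} < ⊤ := by
    calc ∫⁻ t in Set.Ioc (0:ℝ) 1, μ {θ : Fin d → ℝ | t < (‖θ‖^2)⁻¹}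
        ≤ ∫⁻ _ in Set.Ioc (0:ℝ) 1, volume S := lintegral_mono (fun t => hb1 t)
      _ = volume S * volume (Set.Ioc (0:ℝ) 1) := setLIntegral_const _ _
      _ < ⊤ := by
          apply ENNReal.mul_lt_top hVS
          rw [Real.volume_Ioc]
          exact ENNReal.ofReal_lt_top
  have hpart2 : ∫⁻ t in Set.Ioi (1:ℝ), μ {θ : Fin d → ℝ | t < (‖θ‖^2)⁻¹} < ⊤ := by
    have hint : IntegrableOn (fun t : ℝ => 2^d * t ^ (-(d:ℝ)/2)) (Set.Ioi 1) := by
      apply Integrable.const_mul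
      apply integrableOn_Ioi_rpow_of_lt _ zero_lt_one
      have h3 : (3:ℝ) ≤ (d:ℝ) := by exact_mod_cast hd3
      linarith
    have hbound : ∀ t ∈ Set.Ioi (1:ℝ), μ {θ : Fin d → ℝ | t < (‖θ‖^2)⁻¹}
        ≤ ENNReal.ofReal (2^d * t ^ (-(d:ℝ)/2)) := by
      intro t ht
      have ht0 : (0:ℝ) < t := lt_trans zero_lt_one ht
      refine le_trans (hb2 t ht0) (le_of_eq ?_)
      have hkey : (Real.sqrt t)⁻¹ ^ d = t ^ (-(d:ℝ)/2) := by
        rw [Real.sqrt_eq_rpow, ← Real.rpow_neg ht0.le,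
          ← Real.rpow_natCast (t ^ (-(1/2):ℝ)) d, ← Real.rpow_mul ht0.le]
        congr 1
        push_cast; ring
      rw [mul_pow, hkey]
    calc ∫⁻ t in Set.Ioi (1:ℝ), μ {θ : Fin d → ℝ | t < (‖θ‖^2)⁻¹}
        ≤ ∫⁻ t in Set.Ioi (1:ℝ), ENNReal.ofReal (2^d * t ^ (-(d:ℝ)/2)) :=
          setLIntegral_mono' measurableSet_Ioi hbound
      _ ≤ ∫⁻ t in Set.Ioi (1:ℝ), ‖(fun t : ℝ => 2^d * t ^ (-(d:ℝ)/2)) t‖₊ := by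
          apply lintegral_mono
          intro t
          calc ENNReal.ofReal (2^d * t ^ (-(d:ℝ)/2))
              ≤ ENNReal.ofReal ‖2^d * t ^ (-(d:ℝ)/2)‖ :=
                ENNReal.ofReal_le_ofReal (by rw [Real.norm_eq_abs]; exact le_abs_self _)
            _ = (‖2^d * t ^ (-(d:ℝ)/2)‖₊ : ENNReal) := ofReal_norm _
      _ < ⊤ := hint.2
  exact ENNReal.add_lt_top.2 ⟨hpart1, hpart2⟩

end NormInt

/-- For `d ≥ 3` the Green's function `G_0(x,y) = ∫_0^∞ p(t;x,y) dt` is finite,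
i.e. the integral converges. -/
theorem green_function_finite
    (d : ℕ) (hd : 1 ≤ d) (a : (Fin d → ℤ) → ℝ)
    (hpos : ∀ z : Fin d → ℤ, z ≠ 0 → 0 ≤ a z)
    (hneg : a 0 < 0)
    (hsymm : ∀ z : Fin d → ℤ, a (-z) = a z)
    (hsum : HasSum a 0)
    (hvar : Summable fun z : Fin d → ℤ => (∑ i, ((z i : ℝ)) ^ 2) * a z)
    (hirr : AddSubgroup.closure {z : Fin d → ℤ | 0 < a z} = ⊤)
    (hd3 : 3 ≤ d) (x y : Fin d → ℤ) :
    IntegrableOn (fun t : ℝ => ptrans d a t x y) (Set.Ioi 0) := by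
  classical
  have hπ := Real.pi_pos
  haveI : Nonempty (Fin d) := ⟨⟨0, by omega⟩⟩
  set S : Set (Fin d → ℝ) := Set.Icc (fun _ : Fin d => -π) (fun _ : Fin d => π) with hSdef
  have hSmeas : MeasurableSet S := measurableSet_Icc
  have ha := hsum.summable
  have hφeq : ∀ θ, phiSymb d a θ = - Fsym d a θ := phi_eq_neg_F hsum
  have hφcont : Continuous (phiSymb d a) := by
    have : phiSymb d a = fun θ => - Fsym d a θ := funext hφeq
    rw [this]; exact (F_continuous ha).neg
  obtain ⟨c, hc, hlow⟩ := F_lower hd hpos hneg hsum hirr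
  set g : ℝ → (Fin d → ℝ) → ℝ := fun t θ =>
    Real.exp (phiSymb d a θ * t) * Real.cos (∑ i, θ i * ((y i : ℝ) - (x i : ℝ))) with hgdef
  have hgcont : Continuous (fun p : ℝ × (Fin d → ℝ) => g p.1 p.2) := by
    apply Continuous.mul
    · exact Real.continuous_exp.comp ((hφcont.comp continuous_snd).mul continuous_fst)
    · exact Real.continuous_cos.comp (continuous_finset_sum _ (fun i _ =>
        ((continuous_apply i).comp continuous_snd).mul continuous_const))
  have hmain : IntegrableOn (fun t => ∫ θ in S, g t θ) (Set.Ioi 0) := by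
    constructor
    · exact hgcont.stronglyMeasurable.integral_prod_right'.aestronglyMeasurable
    · rw [hasFiniteIntegral_iff_norm]
      -- pointwise bound by the lintegral of the exponential
      have hb1 : ∀ t : ℝ, ENNReal.ofReal ‖∫ θ in S, g t θ‖
          ≤ ∫⁻ θ in S, ENNReal.ofReal (Real.exp (phiSymb d a θ * t)) := by
        intro t
        calc ENNReal.ofReal ‖∫ θ in S, g t θ‖
            = (‖∫ θ in S, g t θ‖₊ : ENNReal) := ofReal_norm _
          _ ≤ ∫⁻ θ in S, (‖g t θ‖₊ : ENNReal) := enorm_integral_le_lintegral_enorm _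
          _ ≤ ∫⁻ θ in S, ENNReal.ofReal (Real.exp (phiSymb d a θ * t)) := by
              apply lintegral_mono
              intro θ
              show (‖g t θ‖₊ : ENNReal) ≤ ENNReal.ofReal (Real.exp (phiSymb d a θ * t))
              rw [← enorm_eq_nnnorm, ← ofReal_norm]
              apply ENNReal.ofReal_le_ofReal
              rw [hgdef]
              simp only [norm_mul, Real.norm_eq_abs, Real.abs_exp]
              calc Real.exp (phiSymb d a θ * t) * |Real.cos (∑ i, θ i * ((y i : ℝ) - (x i : ℝ)))|
                  ≤ Real.exp (phiSymb d a θ * t) * 1 := by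
                    apply mul_le_mul_of_nonneg_left (Real.abs_cos_le_one _) (Real.exp_pos _).le
                _ = Real.exp (phiSymb d a θ * t) := mul_one _
      -- joint measurability
      have hjoint : Measurable (fun p : ℝ × (Fin d → ℝ) =>
          ENNReal.ofReal (Real.exp (phiSymb d a p.2 * p.1))) := by
        apply Measurable.ennreal_ofReal
        exact (Real.continuous_exp.comp ((hφcont.comp continuous_snd).mul continuous_fst)).measurable
      calc ∫⁻ t in Set.Ioi (0:ℝ), ENNReal.ofReal ‖∫ θ in S, g t θ‖
          ≤ ∫⁻ t in Set.Ioi (0:ℝ), ∫⁻ θ in S, ENNReal.ofReal (Real.exp (phiSymb d a θ * t)) :=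
            lintegral_mono hb1
        _ = ∫⁻ θ in S, ∫⁻ t in Set.Ioi (0:ℝ), ENNReal.ofReal (Real.exp (phiSymb d a θ * t)) :=
            lintegral_lintegral_swap hjoint.aemeasurable
        _ ≤ ∫⁻ θ in S, ENNReal.ofReal (c⁻¹ * (‖θ‖^2)⁻¹) := by
            apply lintegral_mono_ae
            rw [ae_restrict_iff' hSmeas]
            have hsing : volume ({(0 : Fin d → ℝ)} : Set (Fin d → ℝ)) = 0 := by
              have h1 : ({(0 : Fin d → ℝ)} : Set (Fin d → ℝ))
                  = Set.pi Set.univ (fun _ : Fin d => ({0} : Set ℝ)) := by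
                rw [Set.univ_pi_singleton]
                rfl
              rw [h1, volume_pi_pi]
              rw [Finset.prod_eq_zero (Finset.mem_univ (Classical.arbitrary (Fin d)))]
              exact Real.volume_singleton
            have h0 : ∀ᵐ θ : (Fin d → ℝ) ∂volume, θ ≠ (0 : Fin d → ℝ) := by
              rw [ae_iff]
              have h2 : {θ : Fin d → ℝ | ¬ θ ≠ 0} = {(0 : Fin d → ℝ)} := by ext θ; simp
              rw [h2]; exact hsing
            filter_upwards [h0] with θ hθ0 hθS
            have hFpos : 0 < Fsym d a θ := F_pos hpos hneg ha hirr hθS hθ0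
            have hnorm : 0 < ‖θ‖ := norm_pos_iff.2 hθ0
            have hcn : 0 < c * ‖θ‖^2 := by positivity
            -- compute the inner integral
            have hval : ∫⁻ t in Set.Ioi (0:ℝ), ENNReal.ofReal (Real.exp (phiSymb d a θ * t))
                = ENNReal.ofReal ((Fsym d a θ)⁻¹) := by
              have hint : IntegrableOn (fun t : ℝ => Real.exp (-(Fsym d a θ) * t))
                  (Set.Ioi 0) := exp_neg_integrableOn_Ioi 0 hFpos
              calc ∫⁻ t in Set.Ioi (0:ℝ), ENNReal.ofReal (Real.exp (phiSymb d a θ * t))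
                  = ∫⁻ t in Set.Ioi (0:ℝ), ENNReal.ofReal (Real.exp (-(Fsym d a θ) * t)) := by
                    apply lintegral_congr
                    intro t
                    rw [hφeq]
                _ = ENNReal.ofReal (∫ t in Set.Ioi (0:ℝ), Real.exp (-(Fsym d a θ) * t)) :=
                    (ofReal_integral_eq_lintegral_ofReal hint
                      (Filter.Eventually.of_forall (fun t => (Real.exp_pos _).le))).symm
                _ = ENNReal.ofReal ((Fsym d a θ)⁻¹) := by
                    congr 1
                    rw [show (∫ t in Set.Ioi (0:ℝ), Real.exp (-(Fsym d a θ) * t))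
                        = ∫ t in Set.Ioi (0:ℝ), Real.exp (-(Fsym d a θ * t)) by
                      simp only [neg_mul]]
                    have hcomp := integral_comp_mul_left_Ioi
                      (fun u => Real.exp (-u)) 0 hFpos
                    rw [mul_zero] at hcomp
                    rw [hcomp, integral_exp_neg_Ioi_zero, smul_eq_mul, mul_one]
            rw [hval]
            apply ENNReal.ofReal_le_ofReal
            rw [← mul_inv]
            exact inv_anti₀ hcn (le_trans (hlow θ hθS) le_rfl)
        _ = ENNReal.ofReal c⁻¹ * ∫⁻ θ in S, ENNReal.ofReal ((‖θ‖^2)⁻¹) := by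
            rw [← lintegral_const_mul' _ _ ENNReal.ofReal_ne_top]
            apply lintegral_congr
            intro θ
            rw [← ENNReal.ofReal_mul (by positivity)]
        _ < ⊤ := ENNReal.mul_lt_top ENNReal.ofReal_lt_top (lintegral_inv_norm_sq_lt_top hd3)
  have : (fun t : ℝ => ptrans d a t x y) = fun t => ((2 * π) ^ d)⁻¹ * ∫ θ in S, g t θ := by
    funext t; rfl
  rw [this]
  exact hmain.const_mul _
end

section
/- If d = 1 or d = 2, then G_λ(0, 0) → ∞ as λ → 0+; that is, for every M > 0 there exists λ_0 > 0 such that ∫_0^∞ e^{-λt} p(t; 0, 0) dt > M for all 0 < λ < λ_0. -/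
open MeasureTheory Real Filter Topology Asymptotics

/-- For `d = 1` or `d = 2`, `G_λ(0,0) → ∞` as `λ → 0+`. -/
theorem Glam_tendsto_infinity
    (d : ℕ) (hd : 1 ≤ d) (a : (Fin d → ℤ) → ℝ)
    (hpos : ∀ z : Fin d → ℤ, z ≠ 0 → 0 ≤ a z)
    (hneg : a 0 < 0)
    (hsymm : ∀ z : Fin d → ℤ, a (-z) = a z)
    (hsum : HasSum a 0)
    (hvar : Summable fun z : Fin d → ℤ => (∑ i, ((z i : ℝ)) ^ 2) * a z)
    (hirr : AddSubgroup.closure {z : Fin d → ℤ | 0 < a z} = ⊤)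
    (hd12 : d = 1 ∨ d = 2) :
    ∀ M : ℝ, 0 < M → ∃ lam₀ : ℝ, 0 < lam₀ ∧
      ∀ lam : ℝ, 0 < lam → lam < lam₀ → M < Glam d a lam 0 0 := by
  intro M hM
  have hSa : Summable a := hsum.summable
  set K : ℝ := ∑' z : Fin d → ℤ, (∑ i, ((z i : ℝ)) ^ 2) * a z with hK
  have hKnn : 0 ≤ K := by
    refine tsum_nonneg fun z => ?_
    by_cases hz : z = 0
    · subst hz; simp
    · exact mul_nonneg (Finset.sum_nonneg fun i _ => sq_nonneg _) (hpos z hz)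
  have hScos : ∀ θ : Fin d → ℝ,
      Summable fun z : Fin d → ℤ => a z * Real.cos (∑ i, (z i : ℝ) * θ i) := by
    intro θ
    refine Summable.of_norm_bounded hSa.abs fun z => ?_
    calc ‖a z * Real.cos (∑ i, (z i : ℝ) * θ i)‖
        = |a z| * |Real.cos (∑ i, (z i : ℝ) * θ i)| := abs_mul _ _
      _ ≤ |a z| * 1 := mul_le_mul_of_nonneg_left (Real.abs_cos_le_one _) (abs_nonneg _)
      _ = |a z| := mul_one _
  have hSg : ∀ θ : Fin d → ℝ,
      Summable fun z : Fin d → ℤ => a z * (Real.cos (∑ i, (z i : ℝ) * θ i) - 1) := by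
    intro θ
    have h := (hScos θ).sub hSa
    simpa [mul_sub] using h
  have hphi_eq : ∀ θ : Fin d → ℝ, phiSymb d a θ
      = ∑' z : Fin d → ℤ, a z * (Real.cos (∑ i, (z i : ℝ) * θ i) - 1) := by
    intro θ
    have h2 : (∑' z : Fin d → ℤ, (a z * Real.cos (∑ i, (z i : ℝ) * θ i) - a z))
        = ∑' z : Fin d → ℤ, a z * Real.cos (∑ i, (z i : ℝ) * θ i) := by
      rw [Summable.tsum_sub (hScos θ) hSa, hsum.tsum_eq, sub_zero]
    rw [phiSymb, ← h2]
    exact tsum_congr fun z => by ring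
  have hphi_ub : ∀ θ : Fin d → ℝ, phiSymb d a θ ≤ 0 := by
    intro θ
    rw [hphi_eq θ]
    refine tsum_nonpos fun z => ?_
    by_cases hz : z = 0
    · subst hz; simp
    · exact mul_nonpos_of_nonneg_of_nonpos (hpos z hz)
        (sub_nonpos.mpr (Real.cos_le_one _))
  have hphi_lb : ∀ θ : Fin d → ℝ, -(K / 2 * ∑ i, θ i ^ 2) ≤ phiSymb d a θ := by
    intro θ
    rw [hphi_eq θ]
    have hSlow : Summable fun z : Fin d → ℤ =>
        -((∑ i, θ i ^ 2) / 2 * ((∑ i, ((z i : ℝ)) ^ 2) * a z)) :=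
      (hvar.mul_left _).neg
    have hle : ∀ z : Fin d → ℤ, -((∑ i, θ i ^ 2) / 2 * ((∑ i, ((z i : ℝ)) ^ 2) * a z))
        ≤ a z * (Real.cos (∑ i, (z i : ℝ) * θ i) - 1) := by
      intro z
      by_cases hz : z = 0
      · subst hz; simp
      · have hcs : (∑ i, (z i : ℝ) * θ i) ^ 2
            ≤ (∑ i, ((z i : ℝ)) ^ 2) * ∑ i, θ i ^ 2 :=
          Finset.sum_mul_sq_le_sq_mul_sq _ _ _
        have hcos : 1 - (∑ i, (z i : ℝ) * θ i) ^ 2 / 2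
            ≤ Real.cos (∑ i, (z i : ℝ) * θ i) :=
          Real.one_sub_sq_div_two_le_cos
        nlinarith [hpos z hz, mul_le_mul_of_nonneg_left hcs (hpos z hz)]
    have ht : (∑' z : Fin d → ℤ, -((∑ i, θ i ^ 2) / 2 * ((∑ i, ((z i : ℝ)) ^ 2) * a z)))
        = -(K / 2 * ∑ i, θ i ^ 2) := by
      rw [tsum_neg, tsum_mul_left, hK]; ring
    rw [← ht]
    exact Summable.tsum_le_tsum hle hSlow (hSg θ)
  have hphi_cont : Continuous (phiSymb d a) := by
    refine continuous_tsum (fun z => ?_) hSa.abs (fun z θ => ?_)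
    · exact continuous_const.mul (Real.continuous_cos.comp
        (continuous_finset_sum _ fun i _ => continuous_const.mul (continuous_apply i)))
    · calc ‖a z * Real.cos (∑ i, (z i : ℝ) * θ i)‖
          = |a z| * |Real.cos (∑ i, (z i : ℝ) * θ i)| := abs_mul _ _
        _ ≤ |a z| * 1 := mul_le_mul_of_nonneg_left (Real.abs_cos_le_one _) (abs_nonneg _)
        _ = |a z| := mul_one _
  set Q : Set (Fin d → ℝ) := Set.Icc (fun _ : Fin d => -π) (fun _ : Fin d => π) with hQ
  have hIQ : ∀ t : ℝ, IntegrableOn (fun θ => Real.exp (phiSymb d a θ * t)) Q volume := by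
    intro t
    exact (Real.continuous_exp.comp (hphi_cont.mul continuous_const)).continuousOn.integrableOn_compact
      isCompact_Icc
  have hvolQ : (volume Q).toReal = (2 * π) ^ d := by
    rw [hQ, Real.volume_Icc_pi_toReal (fun i => by linarith [Real.pi_pos])]
    simp [Finset.prod_const, sub_neg_eq_add]
    ring_nf
  have hp00 : ∀ t : ℝ, ptrans d a t 0 0
      = ((2 * π) ^ d)⁻¹ * ∫ θ in Q, Real.exp (phiSymb d a θ * t) := by
    intro t
    simp [ptrans, hQ]
  have hp_nonneg : ∀ t : ℝ, 0 ≤ ptrans d a t 0 0 := by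
    intro t
    rw [hp00]
    exact mul_nonneg (by positivity)
      (setIntegral_nonneg measurableSet_Icc fun θ _ => (Real.exp_pos _).le)
  have hp_le_one : ∀ t : ℝ, 0 ≤ t → ptrans d a t 0 0 ≤ 1 := by
    intro t ht
    rw [hp00]
    have h1 : (∫ θ in Q, Real.exp (phiSymb d a θ * t)) ≤ ∫ _θ in Q, (1 : ℝ) := by
      refine setIntegral_mono_on (hIQ t)
        ((integrableOn_const_iff).2 (Or.inr isCompact_Icc.measure_lt_top)) measurableSet_Icc
        fun θ _ => ?_
      exact Real.exp_le_one_iff.mpr (mul_nonpos_of_nonpos_of_nonneg (hphi_ub θ) ht)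
    have h2 : (∫ _θ in Q, (1 : ℝ)) = (2 * π) ^ d := by
      rw [setIntegral_const, smul_eq_mul, mul_one, measureReal_def, hvolQ]
    calc ((2 * π) ^ d)⁻¹ * ∫ θ in Q, Real.exp (phiSymb d a θ * t)
        ≤ ((2 * π) ^ d)⁻¹ * (2 * π) ^ d := by
          rw [← h2] at *; exact mul_le_mul_of_nonneg_left h1 (by positivity)
      _ = 1 := inv_mul_cancel₀ (by positivity)
  have hp_anti : Antitone fun t => ptrans d a t 0 0 := by
    intro t1 t2 h12
    simp only [hp00]
    refine mul_le_mul_of_nonneg_left ?_ (by positivity)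
    refine setIntegral_mono_on (hIQ t2) (hIQ t1) measurableSet_Icc fun θ _ => ?_
    exact Real.exp_le_exp.mpr (mul_le_mul_of_nonpos_left h12 (hphi_ub θ))
  set c : ℝ := ((2 * π) ^ d)⁻¹ * (2 ^ d * Real.exp (-(K * d) / 2)) with hc
  have hcpos : 0 < c := by rw [hc]; positivity
  have hp_lb : ∀ t : ℝ, 1 ≤ t → c / t ≤ ptrans d a t 0 0 := by
    intro t ht
    have ht0 : (0 : ℝ) < t := lt_of_lt_of_le one_pos ht
    set ε : ℝ := (Real.sqrt t)⁻¹ with hε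
    have hε0 : 0 < ε := inv_pos.2 (Real.sqrt_pos.2 ht0)
    have hsq1 : 1 ≤ Real.sqrt t := Real.one_le_sqrt.mpr ht
    have hε1 : ε ≤ 1 := by
      rw [hε]
      exact inv_le_one_of_one_le₀ hsq1
    have hεπ : ε ≤ π := le_trans hε1 (by linarith [Real.pi_gt_three])
    have hε2t : ε ^ 2 * t = 1 := by
      rw [hε, inv_pow, Real.sq_sqrt ht0.le]
      exact inv_mul_cancel₀ (ne_of_gt ht0)
    set S : Set (Fin d → ℝ) := Set.Icc (fun _ : Fin d => -ε) (fun _ : Fin d => ε) with hS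
    have hSsub : S ⊆ Q := by
      rw [hS, hQ]
      exact Set.Icc_subset_Icc (fun i => neg_le_neg hεπ) (fun i => hεπ)
    have step1 : (∫ θ in S, Real.exp (phiSymb d a θ * t))
        ≤ ∫ θ in Q, Real.exp (phiSymb d a θ * t) :=
      setIntegral_mono_set (hIQ t)
        (Filter.Eventually.of_forall fun θ => (Real.exp_pos _).le)
        (HasSubset.Subset.eventuallyLE hSsub)
    have step2 : ∀ θ ∈ S, Real.exp (-(K * d) / 2) ≤ Real.exp (phiSymb d a θ * t) := by
      intro θ hθ
      apply Real.exp_le_exp.mpr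
      have hsum2 : (∑ i, θ i ^ 2) ≤ d * ε ^ 2 := by
        calc ∑ i, θ i ^ 2 ≤ ∑ _i : Fin d, ε ^ 2 :=
              Finset.sum_le_sum fun i _ => sq_le_sq' (hθ.1 i) (hθ.2 i)
          _ = d * ε ^ 2 := by simp [Finset.sum_const, Finset.card_univ, nsmul_eq_mul]
      have h1 : -(K / 2 * ∑ i, θ i ^ 2) ≤ phiSymb d a θ := hphi_lb θ
      have h2 : -(K / 2 * (d * ε ^ 2)) * t ≤ phiSymb d a θ * t := by
        apply mul_le_mul_of_nonneg_right _ ht0.le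
        refine le_trans (neg_le_neg ?_) h1
        exact mul_le_mul_of_nonneg_left hsum2 (by positivity)
      have h3 : -(K / 2 * (d * ε ^ 2)) * t = -(K * d) / 2 := by
        have h4 : -(K / 2 * (d * ε ^ 2)) * t = -(K * d) / 2 * (ε ^ 2 * t) := by ring
        rw [h4, hε2t, mul_one]
      linarith
    have step3 : (2 * ε) ^ d * Real.exp (-(K * d) / 2)
        ≤ ∫ θ in S, Real.exp (phiSymb d a θ * t) := by
      have hSint : IntegrableOn (fun θ => Real.exp (phiSymb d a θ * t)) S volume :=
        (hIQ t).mono_set hSsub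
      have h4 : (∫ _θ in S, Real.exp (-(K * d) / 2))
          ≤ ∫ θ in S, Real.exp (phiSymb d a θ * t) :=
        setIntegral_mono_on ((integrableOn_const_iff).2 (Or.inr isCompact_Icc.measure_lt_top))
          hSint measurableSet_Icc step2
      have h5 : (∫ _θ in S, Real.exp (-(K * d) / 2))
          = (2 * ε) ^ d * Real.exp (-(K * d) / 2) := by
        rw [setIntegral_const, smul_eq_mul]
        congr 1
        rw [measureReal_def, hS, Real.volume_Icc_pi_toReal (fun i => by linarith)]
        simp [Finset.prod_const, sub_neg_eq_add]
        ring_nf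
      linarith
    rw [hp00]
    have hεd : t⁻¹ ≤ ε ^ d := by
      rcases hd12 with h | h <;> subst h
      · rw [pow_one, hε]
        apply inv_anti₀ (Real.sqrt_pos.2 ht0)
        calc Real.sqrt t ≤ Real.sqrt (t ^ 2) := Real.sqrt_le_sqrt (by nlinarith)
          _ = t := Real.sqrt_sq ht0.le
      · rw [hε, inv_pow, Real.sq_sqrt ht0.le]
    have h6 : c / t ≤ ((2 * π) ^ d)⁻¹ * ((2 * ε) ^ d * Real.exp (-(K * d) / 2)) := by
      have key : ((2 * π) ^ d)⁻¹ * (2 ^ d * Real.exp (-(K * d) / 2)) * t⁻¹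
          ≤ ((2 * π) ^ d)⁻¹ * (2 ^ d * Real.exp (-(K * d) / 2)) * ε ^ d :=
        mul_le_mul_of_nonneg_left hεd (by positivity)
      calc c / t = ((2 * π) ^ d)⁻¹ * (2 ^ d * Real.exp (-(K * d) / 2)) * t⁻¹ := by
            rw [hc, div_eq_mul_inv]
        _ ≤ ((2 * π) ^ d)⁻¹ * (2 ^ d * Real.exp (-(K * d) / 2)) * ε ^ d := key
        _ = ((2 * π) ^ d)⁻¹ * ((2 * ε) ^ d * Real.exp (-(K * d) / 2)) := by
            rw [mul_pow]; ring
    calc c / t ≤ ((2 * π) ^ d)⁻¹ * ((2 * ε) ^ d * Real.exp (-(K * d) / 2)) := h6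
      _ ≤ ((2 * π) ^ d)⁻¹ * ∫ θ in S, Real.exp (phiSymb d a θ * t) :=
          mul_le_mul_of_nonneg_left step3 (by positivity)
      _ ≤ ((2 * π) ^ d)⁻¹ * ∫ θ in Q, Real.exp (phiSymb d a θ * t) :=
          mul_le_mul_of_nonneg_left step1 (by positivity)
  -- choose lam₀ and conclude
  refine ⟨min 1 (Real.exp (-(M * Real.exp 1 / c))), lt_min one_pos (Real.exp_pos _), ?_⟩
  intro lam hlam hlt
  have hlam1 : lam < 1 := lt_of_lt_of_le hlt (min_le_left _ _)
  have hlame : Real.log lam < -(M * Real.exp 1 / c) :=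
    (Real.log_lt_iff_lt_exp hlam).mpr (lt_of_lt_of_le hlt (min_le_right _ _))
  set T : ℝ := lam⁻¹ with hT
  have hT1 : 1 < T := by
    rw [hT]
    exact one_lt_inv_iff₀.mpr ⟨hlam, hlam1⟩
  have hT0 : (0 : ℝ) < T := lt_trans one_pos hT1
  have hlogT : M * Real.exp 1 / c < Real.log T := by
    rw [hT, Real.log_inv]; linarith
  have hMc : M < Real.exp (-1) * c * Real.log T := by
    have h := mul_lt_mul_of_pos_left hlogT (by positivity : (0 : ℝ) < Real.exp (-1) * c)
    have heq : Real.exp (-1) * c * (M * Real.exp 1 / c) = M := by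
      rw [Real.exp_neg]
      field_simp
    linarith
  have hmeas : Measurable fun t => ptrans d a t 0 0 := hp_anti.measurable
  have hfm : AEStronglyMeasurable (fun t => Real.exp (-lam * t) * ptrans d a t 0 0)
      (volume.restrict (Set.Ioi (0 : ℝ))) :=
    ((Real.measurable_exp.comp (measurable_const.mul measurable_id)).mul
      hmeas).aestronglyMeasurable
  have hfi : IntegrableOn (fun t => Real.exp (-lam * t) * ptrans d a t 0 0)
      (Set.Ioi (0 : ℝ)) volume := by
    refine Integrable.mono (exp_neg_integrableOn_Ioi 0 hlam) hfm ?_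
    filter_upwards [ae_restrict_mem measurableSet_Ioi] with t ht
    rw [Real.norm_eq_abs, Real.norm_eq_abs, abs_mul, neg_mul]
    have h2 : |ptrans d a t 0 0| ≤ 1 :=
      abs_le.mpr ⟨by linarith [hp_nonneg t], hp_le_one t (le_of_lt ht)⟩
    exact le_trans (mul_le_mul_of_nonneg_left h2 (abs_nonneg _)) (le_of_eq (mul_one _))
  have hsub : Set.Ioc (1 : ℝ) T ⊆ Set.Ioi 0 := fun x hx => lt_trans one_pos hx.1
  have step_a : (∫ t in Set.Ioc (1 : ℝ) T, Real.exp (-lam * t) * ptrans d a t 0 0)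
      ≤ Glam d a lam 0 0 := by
    rw [Glam]
    exact setIntegral_mono_set hfi
      (Filter.Eventually.of_forall fun t => mul_nonneg (Real.exp_pos _).le (hp_nonneg t))
      (HasSubset.Subset.eventuallyLE hsub)
  have hfiI : IntegrableOn (fun t => Real.exp (-lam * t) * ptrans d a t 0 0)
      (Set.Ioc (1 : ℝ) T) volume := hfi.mono_set hsub
  have hgI : IntegrableOn (fun t : ℝ => Real.exp (-1) * c * t⁻¹) (Set.Ioc (1 : ℝ) T) volume := by
    apply IntegrableOn.mono_set _ Set.Ioc_subset_Icc_self
    apply ContinuousOn.integrableOn_Icc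
    exact continuousOn_const.mul (continuousOn_id.inv₀ fun x hx => by
      have : (1 : ℝ) ≤ x := hx.1
      intro h0; rw [id] at h0; linarith)
  have step_b : (∫ t in Set.Ioc (1 : ℝ) T, Real.exp (-1) * c * t⁻¹)
      ≤ ∫ t in Set.Ioc (1 : ℝ) T, Real.exp (-lam * t) * ptrans d a t 0 0 := by
    refine setIntegral_mono_on hgI hfiI measurableSet_Ioc fun t ht => ?_
    have ht1 : (1 : ℝ) ≤ t := ht.1.le
    have htpos : (0 : ℝ) < t := lt_of_lt_of_le one_pos ht1
    have h1 : Real.exp (-1) ≤ Real.exp (-lam * t) := by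
      apply Real.exp_le_exp.mpr
      have h2 : lam * t ≤ lam * T := mul_le_mul_of_nonneg_left ht.2 hlam.le
      rw [hT, mul_inv_cancel₀ (ne_of_gt hlam)] at h2
      linarith
    have h3 : c / t ≤ ptrans d a t 0 0 := hp_lb t ht1
    calc Real.exp (-1) * c * t⁻¹ = Real.exp (-1) * (c / t) := by
          rw [div_eq_mul_inv]; ring
      _ ≤ Real.exp (-lam * t) * ptrans d a t 0 0 :=
          mul_le_mul h1 h3 (by positivity) (Real.exp_pos _).le
  have step_c : (∫ t in Set.Ioc (1 : ℝ) T, Real.exp (-1) * c * t⁻¹)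
      = Real.exp (-1) * c * Real.log T := by
    rw [MeasureTheory.integral_const_mul]
    congr 1
    rw [← intervalIntegral.integral_of_le hT1.le, integral_inv_of_pos one_pos hT0, div_one]
  calc M < Real.exp (-1) * c * Real.log T := hMc
    _ = ∫ t in Set.Ioc (1 : ℝ) T, Real.exp (-1) * c * t⁻¹ := step_c.symm
    _ ≤ ∫ t in Set.Ioc (1 : ℝ) T, Real.exp (-lam * t) * ptrans d a t 0 0 := step_b
    _ ≤ Glam d a lam 0 0 := step_a
end

section
/- For every d ≥ 1 and every x ∈ ℤ^d with x ≠ 0, the limit lim_{λ→0+} a·(G_λ(0, 0) - G_λ(0, x)) exists, is finite, and equals ρ_d(x) = (a/(2π)^d) ∫_{[-π,π]^d} (cos(⟨x,θ⟩) - 1)/φ(θ) dθ. -/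
open MeasureTheory Real Filter Topology Asymptotics

/-! ### Auxiliary definitions and lemmas -/

/-- `ψ(θ) = -φ(θ) = ∑_z a(z)(1 - cos⟨z,θ⟩)`. -/
noncomputable def psiAux (d : ℕ) (a : (Fin d → ℤ) → ℝ) (θ : Fin d → ℝ) : ℝ :=
  ∑' z : Fin d → ℤ, a z * (1 - Real.cos (∑ i, (z i : ℝ) * θ i))

/-- The cube `[-π,π]^d`. -/
def cubeSet (d : ℕ) : Set (Fin d → ℝ) :=
  Set.Icc (fun _ : Fin d => -π) (fun _ : Fin d => π)

lemma rho_sin_half_sq (x : ℝ) : Real.sin (x/2)^2 = (1 - Real.cos x)/2 := by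
  have h1 := Real.sin_sq (x/2)
  have h2 := Real.cos_sq (x/2)
  rw [h1, h2]
  have : 2*(x/2) = x := by ring
  rw [this]; ring

lemma rho_one_sub_cos_add (s t : ℝ) :
    1 - Real.cos (s + t) ≤ 2*(1-Real.cos s) + 2*(1-Real.cos t) := by
  have h1 : Real.sin ((s+t)/2) = Real.sin (s/2) * Real.cos (t/2) + Real.cos (s/2) * Real.sin (t/2) := by
    rw [← Real.sin_add]; ring_nf
  have h2 : (Real.sin (s/2) * Real.cos (t/2) + Real.cos (s/2) * Real.sin (t/2))^2
      = (1 - Real.cos (s+t))/2 := by rw [← h1]; exact rho_sin_half_sq (s+t)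
  have h3 := rho_sin_half_sq s
  have h4 := rho_sin_half_sq t
  have h5 : Real.cos (s/2)^2 ≤ 1 := Real.cos_sq_le_one _
  have h6 : Real.cos (t/2)^2 ≤ 1 := Real.cos_sq_le_one _
  nlinarith [sq_nonneg (Real.sin (s/2) * Real.cos (t/2) - Real.cos (s/2) * Real.sin (t/2)),
    mul_nonneg (sq_nonneg (Real.sin (s/2))) (by linarith : (0:ℝ) ≤ 1 - Real.cos (t/2)^2),
    mul_nonneg (sq_nonneg (Real.sin (t/2))) (by linarith : (0:ℝ) ≤ 1 - Real.cos (s/2)^2)]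

lemma rho_exp_int {b : ℝ} (hb : 0 < b) :
    ∫ t in Set.Ioi (0:ℝ), Real.exp (-b*t) = 1/b := by
  have h : ∀ t ∈ Set.Ici (0:ℝ), HasDerivAt (fun u => -Real.exp (-b*u)/b) (Real.exp (-b*t)) t := by
    intro t _
    have : HasDerivAt (fun u => Real.exp (-b*u)) (Real.exp (-b*t) * (-b)) t := by
      simpa [mul_comm] using ((hasDerivAt_id t).const_mul (-b)).exp
    convert (this.neg.div_const b) using 1
    all_goals first | rfl | field_simp
  have htend : Tendsto (fun t => -Real.exp (-b*t)/b) atTop (𝓝 0) := by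
    have : Tendsto (fun t : ℝ => -b*t) atTop atBot :=
      (tendsto_const_mul_atBot_of_neg (by linarith)).2 tendsto_id
    have := (Real.tendsto_exp_atBot.comp this).neg.div_const b
    simpa using this
  have key := integral_Ioi_of_hasDerivAt_of_tendsto' h (exp_neg_integrableOn_Ioi 0 hb) htend
  simp only [neg_mul, mul_zero, neg_zero, Real.exp_zero] at key ⊢
  rw [key]; field_simp; ring

section Aux

variable {d : ℕ} {a : (Fin d → ℤ) → ℝ}

lemma rho_summable_cos_term (hsum : Summable a) (θ : Fin d → ℝ) :
    Summable fun z : Fin d → ℤ => a z * Real.cos (∑ i, (z i : ℝ) * θ i) := by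
  apply Summable.of_norm_bounded (summable_abs_iff.mpr hsum)
  intro z
  rw [norm_mul]
  calc ‖a z‖ * ‖Real.cos (∑ i, (z i : ℝ) * θ i)‖ ≤ ‖a z‖ * 1 :=
        mul_le_mul_of_nonneg_left
          (abs_le.mpr ⟨Real.neg_one_le_cos _, Real.cos_le_one _⟩) (norm_nonneg _)
    _ = |a z| := by rw [mul_one]; rfl

lemma rho_summable_psi_term (hsum : Summable a) (θ : Fin d → ℝ) :
    Summable fun z : Fin d → ℤ => a z * (1 - Real.cos (∑ i, (z i : ℝ) * θ i)) := by
  have h : (fun z : Fin d → ℤ => a z * (1 - Real.cos (∑ i, (z i : ℝ) * θ i)))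
      = fun z => a z - a z * Real.cos (∑ i, (z i : ℝ) * θ i) := by
    funext z; ring
  rw [h]
  exact hsum.sub (rho_summable_cos_term hsum θ)

lemma rho_psi_term_nonneg (hpos : ∀ z : Fin d → ℤ, z ≠ 0 → 0 ≤ a z) (θ : Fin d → ℝ)
    (z : Fin d → ℤ) : 0 ≤ a z * (1 - Real.cos (∑ i, (z i : ℝ) * θ i)) := by
  by_cases hz : z = 0
  · subst hz; simp
  · exact mul_nonneg (hpos z hz) (by nlinarith [Real.cos_le_one (∑ i, (z i : ℝ) * θ i)])

lemma rho_psi_nonneg (hpos : ∀ z : Fin d → ℤ, z ≠ 0 → 0 ≤ a z) (θ : Fin d → ℝ) :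
    0 ≤ psiAux d a θ :=
  tsum_nonneg (rho_psi_term_nonneg hpos θ)

lemma rho_phi_eq_neg_psi (hsum : HasSum a 0) (θ : Fin d → ℝ) :
    phiSymb d a θ = -psiAux d a θ := by
  have hs : Summable a := hsum.summable
  have h1 : psiAux d a θ = ∑' z : Fin d → ℤ, (a z - a z * Real.cos (∑ i, (z i : ℝ) * θ i)) := by
    unfold psiAux; congr 1; funext z; ring
  rw [h1, Summable.tsum_sub hs (rho_summable_cos_term hs θ), hsum.tsum_eq]
  unfold phiSymb; ring

lemma rho_continuous_phi (hsum : Summable a) : Continuous (phiSymb d a) := by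
  apply continuous_tsum (fun z => by fun_prop) (summable_abs_iff.mpr hsum)
  intro z θ
  rw [norm_mul]
  calc ‖a z‖ * ‖Real.cos (∑ i, (z i : ℝ) * θ i)‖ ≤ ‖a z‖ * 1 :=
        mul_le_mul_of_nonneg_left
          (abs_le.mpr ⟨Real.neg_one_le_cos _, Real.cos_le_one _⟩) (norm_nonneg _)
    _ = |a z| := by rw [mul_one]; rfl

lemma rho_continuous_psi (hsum : HasSum a 0) : Continuous (psiAux d a) := by
  have h : psiAux d a = fun θ => -phiSymb d a θ :=
    funext fun θ => by rw [rho_phi_eq_neg_psi hsum θ]; ring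
  rw [h]
  exact (rho_continuous_phi hsum.summable).neg

lemma rho_term_le_psi (hpos : ∀ z : Fin d → ℤ, z ≠ 0 → 0 ≤ a z) (hsum : Summable a)
    (θ : Fin d → ℝ) (z : Fin d → ℤ) :
    a z * (1 - Real.cos (∑ i, (z i : ℝ) * θ i)) ≤ psiAux d a θ :=
  Summable.le_tsum (rho_summable_psi_term hsum θ) z (fun w _ => rho_psi_term_nonneg hpos θ w)

lemma rho_cos_bound (hpos : ∀ z : Fin d → ℤ, z ≠ 0 → 0 ≤ a z) (hsum : Summable a)
    (hirr : AddSubgroup.closure {z : Fin d → ℤ | 0 < a z} = ⊤) (x : Fin d → ℤ) :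
    ∃ C : ℝ, 0 ≤ C ∧ ∀ θ, 1 - Real.cos (∑ i, (x i : ℝ) * θ i) ≤ C * psiAux d a θ := by
  set K : AddSubgroup (Fin d → ℤ) :=
    { carrier := {z | ∃ C : ℝ, 0 ≤ C ∧ ∀ θ, 1 - Real.cos (∑ i, (z i : ℝ) * θ i) ≤ C * psiAux d a θ}
      zero_mem' := ⟨0, le_refl 0, fun θ => by simp⟩
      add_mem' := by
        rintro y z ⟨C1, hC1, h1⟩ ⟨C2, hC2, h2⟩
        refine ⟨2*C1 + 2*C2, by linarith, fun θ => ?_⟩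
        have hL : ∑ i, (((y+z) i : ℤ) : ℝ) * θ i
            = (∑ i, (y i : ℝ) * θ i) + ∑ i, (z i : ℝ) * θ i := by
          rw [← Finset.sum_add_distrib]
          exact Finset.sum_congr rfl fun i _ => by simp [add_mul]
        rw [hL]
        calc 1 - Real.cos _
            ≤ 2*(1-Real.cos (∑ i, (y i : ℝ) * θ i)) + 2*(1-Real.cos (∑ i, (z i : ℝ) * θ i)) :=
              rho_one_sub_cos_add _ _
          _ ≤ 2*(C1 * psiAux d a θ) + 2*(C2 * psiAux d a θ) := by
              have hy := h1 θ; have hz := h2 θ; linarith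
          _ = (2*C1 + 2*C2) * psiAux d a θ := by ring
      neg_mem' := by
        rintro z ⟨C, hC, h⟩
        refine ⟨C, hC, fun θ => ?_⟩
        have hL : ∑ i, (((-z) i : ℤ) : ℝ) * θ i = -∑ i, (z i : ℝ) * θ i := by
          rw [← Finset.sum_neg_distrib]
          exact Finset.sum_congr rfl fun i _ => by simp
        rw [hL, Real.cos_neg]
        exact h θ }
  have hSK : {z : Fin d → ℤ | 0 < a z} ⊆ K := by
    intro z hz
    refine ⟨(a z)⁻¹, le_of_lt (inv_pos.mpr hz), fun θ => ?_⟩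
    have h1 := rho_term_le_psi hpos hsum θ z
    have h2 : 1 - Real.cos (∑ i, (z i : ℝ) * θ i)
        = (a z)⁻¹ * (a z * (1 - Real.cos (∑ i, (z i : ℝ) * θ i))) :=
      (inv_mul_cancel_left₀ hz.ne' _).symm
    rw [h2]
    exact mul_le_mul_of_nonneg_left h1 (le_of_lt (inv_pos.mpr hz))
  have hle : AddSubgroup.closure {z : Fin d → ℤ | 0 < a z} ≤ K :=
    (AddSubgroup.closure_le K).mpr hSK
  rw [hirr] at hle
  exact hle (AddSubgroup.mem_top x)

lemma rho_cube_volume : (volume (cubeSet d)).toReal = (2 * π) ^ d := by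
  rw [cubeSet, Real.volume_Icc_pi_toReal (fun i => neg_le_self Real.pi_pos.le)]
  rw [Finset.prod_const]
  simp [Finset.card_univ]
  ring_nf

lemma rho_glam_diff (hpos : ∀ z : Fin d → ℤ, z ≠ 0 → 0 ≤ a z) (hsum : HasSum a 0)
    (x : Fin d → ℤ) {lam : ℝ} (hlam : 0 < lam) :
    Glam d a lam 0 0 - Glam d a lam 0 x
      = ((2*π)^d)⁻¹ *
        ∫ θ in cubeSet d, (1 - Real.cos (∑ i, (x i : ℝ) * θ i)) / (lam + psiAux d a θ) := by
  have hs : Summable a := hsum.summable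
  have hφc : Continuous (phiSymb d a) := rho_continuous_phi hs
  have hφ0 : ∀ θ, phiSymb d a θ ≤ 0 := fun θ => by
    rw [rho_phi_eq_neg_psi hsum θ]; linarith [rho_psi_nonneg hpos θ]
  have hcvol : volume (cubeSet d) < ⊤ := by rw [cubeSet]; exact isCompact_Icc.measure_lt_top
  have hcm : MeasurableSet (cubeSet d) := by rw [cubeSet]; exact measurableSet_Icc
  have hvolr : (volume (cubeSet d)).toReal = (2*π)^d := rho_cube_volume
  have hπ : (0:ℝ) < (2*π)^d := by positivity
  -- joint continuity of the ptrans integrand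
  have hjc : ∀ y : Fin d → ℤ, Continuous (fun p : ℝ × (Fin d → ℝ) =>
      Real.exp (phiSymb d a p.2 * p.1) *
        Real.cos (∑ i, p.2 i * ((y i : ℝ) - (((0: Fin d → ℤ) i : ℤ) : ℝ)))) := by
    intro y
    apply Continuous.mul
    · exact ((hφc.comp continuous_snd).mul continuous_fst).rexp
    · exact Real.continuous_cos.comp (continuous_finset_sum _ fun i _ =>
        ((continuous_apply i).comp continuous_snd).mul continuous_const)
  -- strong measurability of t ↦ ptrans
  have hmeas : ∀ y : Fin d → ℤ, StronglyMeasurable (fun t => ptrans d a t 0 y) := by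
    intro y
    have h1 : StronglyMeasurable (fun t => ∫ θ in cubeSet d,
        Real.exp (phiSymb d a θ * t) *
          Real.cos (∑ i, θ i * ((y i : ℝ) - (((0: Fin d → ℤ) i : ℤ) : ℝ)))) :=
      StronglyMeasurable.integral_prod_right
        (f := fun (t : ℝ) (θ : Fin d → ℝ) => Real.exp (phiSymb d a θ * t) *
          Real.cos (∑ i, θ i * ((y i : ℝ) - (((0: Fin d → ℤ) i : ℤ) : ℝ))))
        ((hjc y).stronglyMeasurable)
    have : (fun t => ptrans d a t 0 y) = fun t => ((2*π)^d)⁻¹ * (∫ θ in cubeSet d,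
        Real.exp (phiSymb d a θ * t) *
          Real.cos (∑ i, θ i * ((y i : ℝ) - (((0: Fin d → ℤ) i : ℤ) : ℝ)))) := by
      funext t; rw [ptrans, cubeSet]
    rw [this]
    exact h1.const_mul _
  -- bound on ptrans
  have hbnd : ∀ y : Fin d → ℤ, ∀ t : ℝ, 0 ≤ t → ‖ptrans d a t 0 y‖ ≤ 1 := by
    intro y t ht
    rw [ptrans, ← cubeSet, norm_mul, Real.norm_eq_abs (((2*π)^d)⁻¹ : ℝ),
      abs_of_nonneg (by positivity : (0:ℝ) ≤ ((2*π)^d)⁻¹)]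
    have h2 : ‖∫ θ in cubeSet d, Real.exp (phiSymb d a θ * t) *
        Real.cos (∑ i, θ i * ((y i : ℝ) - (((0: Fin d → ℤ) i : ℤ) : ℝ)))‖
        ≤ 1 * (volume (cubeSet d)).toReal := by
      apply norm_setIntegral_le_of_norm_le_const hcvol
      intro θ _
      rw [norm_mul]
      have he : ‖Real.exp (phiSymb d a θ * t)‖ ≤ 1 := by
        rw [Real.norm_eq_abs, Real.abs_exp]
        exact Real.exp_le_one_iff.mpr (mul_nonpos_iff.mpr (Or.inr ⟨hφ0 θ, ht⟩))
      calc ‖Real.exp (phiSymb d a θ * t)‖ * ‖Real.cos _‖ ≤ 1 * 1 :=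
            mul_le_mul he (by rw [Real.norm_eq_abs]; exact Real.abs_cos_le_one _)
              (norm_nonneg _) zero_le_one
        _ = 1 := by norm_num
    rw [hvolr] at h2
    calc ((2*π)^d)⁻¹ * ‖∫ θ in cubeSet d, Real.exp (phiSymb d a θ * t) *
          Real.cos (∑ i, θ i * ((y i : ℝ) - (((0: Fin d → ℤ) i : ℤ) : ℝ)))‖
        ≤ ((2*π)^d)⁻¹ * (1 * (2*π)^d) := mul_le_mul_of_nonneg_left h2 (by positivity)
      _ = 1 := by field_simp
  -- integrability of the Glam integrands
  have hint : ∀ y : Fin d → ℤ, IntegrableOn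
      (fun t => Real.exp (-lam*t) * ptrans d a t 0 y) (Set.Ioi 0) volume := by
    intro y
    apply Integrable.mono' (exp_neg_integrableOn_Ioi 0 hlam)
    · exact ((Real.continuous_exp.comp
        (continuous_const.mul continuous_id)).stronglyMeasurable.mul (hmeas y)).aestronglyMeasurable
    · filter_upwards [ae_restrict_mem measurableSet_Ioi] with t (ht : 0 < t)
      rw [norm_mul, Real.norm_eq_abs (Real.exp _), Real.abs_exp]
      calc Real.exp (-lam*t) * ‖ptrans d a t 0 y‖ ≤ Real.exp (-lam*t) * 1 :=
            mul_le_mul_of_nonneg_left (hbnd y t ht.le) (Real.exp_nonneg _)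
        _ = Real.exp (-lam*t) := mul_one _
  -- sum simplifications
  have hL0 : ∀ θ : Fin d → ℝ,
      (∑ i, θ i * ((((0:Fin d → ℤ) i : ℤ) : ℝ) - (((0:Fin d → ℤ) i : ℤ) : ℝ))) = 0 := by
    intro θ; simp
  have hLx : ∀ θ : Fin d → ℝ,
      (∑ i, θ i * ((x i : ℝ) - (((0:Fin d → ℤ) i : ℤ) : ℝ)))
        = ∑ i, (x i : ℝ) * θ i := by
    intro θ
    exact Finset.sum_congr rfl fun i _ => by simp [mul_comm]
  -- integrability over the cube
  have hIA : ∀ t : ℝ, IntegrableOn (fun θ => Real.exp (phiSymb d a θ * t) *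
      Real.cos (∑ i, θ i * ((((0:Fin d → ℤ) i : ℤ) : ℝ) - (((0:Fin d → ℤ) i : ℤ) : ℝ))))
      (cubeSet d) volume := by
    intro t
    apply ContinuousOn.integrableOn_compact (by rw [cubeSet]; exact isCompact_Icc)
    exact (((hφc.mul continuous_const).rexp).mul (Real.continuous_cos.comp
      (continuous_finset_sum _ fun i _ =>
        (continuous_apply i).mul continuous_const))).continuousOn
  have hIB : ∀ t : ℝ, IntegrableOn (fun θ => Real.exp (phiSymb d a θ * t) *
      Real.cos (∑ i, θ i * ((x i : ℝ) - (((0:Fin d → ℤ) i : ℤ) : ℝ))))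
      (cubeSet d) volume := by
    intro t
    apply ContinuousOn.integrableOn_compact (by rw [cubeSet]; exact isCompact_Icc)
    exact (((hφc.mul continuous_const).rexp).mul (Real.continuous_cos.comp
      (continuous_finset_sum _ fun i _ =>
        (continuous_apply i).mul continuous_const))).continuousOn
  -- pointwise (in t) difference of the transition probabilities
  have hpt : ∀ t : ℝ,
      Real.exp (-lam*t) * ptrans d a t 0 0 - Real.exp (-lam*t) * ptrans d a t 0 x
      = ((2*π)^d)⁻¹ * ∫ θ in cubeSet d, Real.exp (-lam*t) *
          (Real.exp (phiSymb d a θ * t) * (1 - Real.cos (∑ i, (x i : ℝ) * θ i))) := by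
    intro t
    have hdiff : (∫ θ in cubeSet d, Real.exp (phiSymb d a θ * t) *
          Real.cos (∑ i, θ i * ((((0:Fin d → ℤ) i : ℤ) : ℝ) - (((0:Fin d → ℤ) i : ℤ) : ℝ))))
        - (∫ θ in cubeSet d, Real.exp (phiSymb d a θ * t) *
          Real.cos (∑ i, θ i * ((x i : ℝ) - (((0:Fin d → ℤ) i : ℤ) : ℝ))))
        = ∫ θ in cubeSet d, Real.exp (phiSymb d a θ * t) *
            (1 - Real.cos (∑ i, (x i : ℝ) * θ i)) := by
      rw [← integral_sub (hIA t) (hIB t)]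
      apply integral_congr_ae
      apply Filter.Eventually.of_forall
      intro θ
      dsimp only
      rw [hL0 θ, hLx θ, Real.cos_zero]
      ring
    rw [ptrans, ptrans, ← cubeSet]
    rw [show Real.exp (-lam*t) * (((2*π)^d)⁻¹ * ∫ θ in cubeSet d, Real.exp (phiSymb d a θ * t) *
          Real.cos (∑ i, θ i * ((((0:Fin d → ℤ) i : ℤ) : ℝ) - (((0:Fin d → ℤ) i : ℤ) : ℝ))))
        - Real.exp (-lam*t) * (((2*π)^d)⁻¹ * ∫ θ in cubeSet d, Real.exp (phiSymb d a θ * t) *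
          Real.cos (∑ i, θ i * ((x i : ℝ) - (((0:Fin d → ℤ) i : ℤ) : ℝ))))
        = ((2*π)^d)⁻¹ * (Real.exp (-lam*t) *
          ((∫ θ in cubeSet d, Real.exp (phiSymb d a θ * t) *
            Real.cos (∑ i, θ i * ((((0:Fin d → ℤ) i : ℤ) : ℝ) - (((0:Fin d → ℤ) i : ℤ) : ℝ))))
          - ∫ θ in cubeSet d, Real.exp (phiSymb d a θ * t) *
            Real.cos (∑ i, θ i * ((x i : ℝ) - (((0:Fin d → ℤ) i : ℤ) : ℝ))))) by ring]
    rw [hdiff, integral_const_mul]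
  -- joint continuity of the full integrand
  have hFc : Continuous (fun p : ℝ × (Fin d → ℝ) => Real.exp (-lam*p.1) *
      (Real.exp (phiSymb d a p.2 * p.1) * (1 - Real.cos (∑ i, (x i : ℝ) * p.2 i)))) := by
    apply Continuous.mul
    · exact Real.continuous_exp.comp (continuous_const.mul continuous_fst)
    · apply Continuous.mul
      · exact ((hφc.comp continuous_snd).mul continuous_fst).rexp
      · exact continuous_const.sub (Real.continuous_cos.comp
          (continuous_finset_sum _ fun i _ =>
            continuous_const.mul ((continuous_apply i).comp continuous_snd)))
  -- product integrability
  have hFprod : Integrable (Function.uncurry fun (t : ℝ) (θ : Fin d → ℝ) =>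
      Real.exp (-lam*t) * (Real.exp (phiSymb d a θ * t) *
        (1 - Real.cos (∑ i, (x i : ℝ) * θ i))))
      ((volume.restrict (Set.Ioi 0)).prod (volume.restrict (cubeSet d))) := by
    apply (integrable_prod_iff hFc.aestronglyMeasurable).mpr
    constructor
    · apply Filter.Eventually.of_forall
      intro t
      apply ContinuousOn.integrableOn_compact (by rw [cubeSet]; exact isCompact_Icc)
      exact (hFc.comp (Continuous.prodMk_right t)).continuousOn
    · apply Integrable.mono' ((exp_neg_integrableOn_Ioi 0 hlam).mul_const (2*(2*π)^d))
      · exact (StronglyMeasurable.integral_prod_right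
          (f := fun (t : ℝ) (θ : Fin d → ℝ) => ‖Real.exp (-lam*t) *
            (Real.exp (phiSymb d a θ * t) * (1 - Real.cos (∑ i, (x i : ℝ) * θ i)))‖)
          hFc.norm.stronglyMeasurable).aestronglyMeasurable
      · filter_upwards [ae_restrict_mem measurableSet_Ioi] with t (ht : 0 < t)
        have hb : ∀ θ ∈ cubeSet d, ‖‖Real.exp (-lam*t) * (Real.exp (phiSymb d a θ * t) *
            (1 - Real.cos (∑ i, (x i : ℝ) * θ i)))‖‖ ≤ Real.exp (-lam*t) * 2 := by
          intro θ _
          rw [norm_norm, norm_mul, norm_mul, Real.norm_eq_abs (Real.exp _), Real.abs_exp]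
          have he : ‖Real.exp (phiSymb d a θ * t)‖ ≤ 1 := by
            rw [Real.norm_eq_abs, Real.abs_exp]
            exact Real.exp_le_one_iff.mpr (mul_nonpos_iff.mpr (Or.inr ⟨hφ0 θ, ht.le⟩))
          have hc : ‖1 - Real.cos (∑ i, (x i : ℝ) * θ i)‖ ≤ 2 := by
            rw [Real.norm_eq_abs]
            have h1 := Real.neg_one_le_cos (∑ i, (x i : ℝ) * θ i)
            have h2 := Real.cos_le_one (∑ i, (x i : ℝ) * θ i)
            rw [abs_le]; constructor <;> linarith
          calc Real.exp (-lam*t) * (‖Real.exp (phiSymb d a θ * t)‖ *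
                ‖1 - Real.cos (∑ i, (x i : ℝ) * θ i)‖)
              ≤ Real.exp (-lam*t) * (1 * 2) := by
                apply mul_le_mul_of_nonneg_left _ (Real.exp_nonneg _)
                exact mul_le_mul he hc (norm_nonneg _) zero_le_one
            _ = Real.exp (-lam*t) * 2 := by ring
        have hkey : _ ≤ _ * (volume (cubeSet d)).toReal := norm_setIntegral_le_of_norm_le_const hcvol hb
        rw [hvolr] at hkey
        calc ‖∫ θ in cubeSet d, ‖Real.exp (-lam*t) * (Real.exp (phiSymb d a θ * t) *
              (1 - Real.cos (∑ i, (x i : ℝ) * θ i)))‖‖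
            ≤ Real.exp (-lam*t) * 2 * (2*π)^d := hkey
          _ = Real.exp (-lam*t) * (2*(2*π)^d) := by ring
  -- inner t-integral
  have hinner : ∀ θ : Fin d → ℝ, (∫ t in Set.Ioi (0:ℝ), Real.exp (-lam*t) *
      (Real.exp (phiSymb d a θ * t) * (1 - Real.cos (∑ i, (x i : ℝ) * θ i))))
      = (1 - Real.cos (∑ i, (x i : ℝ) * θ i)) / (lam + psiAux d a θ) := by
    intro θ
    have hb : 0 < lam + psiAux d a θ := by linarith [rho_psi_nonneg hpos θ]
    have heq : ∀ t : ℝ, Real.exp (-lam*t) * (Real.exp (phiSymb d a θ * t) *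
        (1 - Real.cos (∑ i, (x i : ℝ) * θ i)))
        = (1 - Real.cos (∑ i, (x i : ℝ) * θ i)) * Real.exp (-(lam + psiAux d a θ)*t) := by
      intro t
      rw [rho_phi_eq_neg_psi hsum θ,
        show -(lam + psiAux d a θ)*t = -lam*t + -psiAux d a θ*t by ring, Real.exp_add]
      ring
    calc (∫ t in Set.Ioi (0:ℝ), Real.exp (-lam*t) * (Real.exp (phiSymb d a θ * t) *
          (1 - Real.cos (∑ i, (x i : ℝ) * θ i))))
        = ∫ t in Set.Ioi (0:ℝ), (1 - Real.cos (∑ i, (x i : ℝ) * θ i)) *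
            Real.exp (-(lam + psiAux d a θ)*t) :=
          integral_congr_ae (Filter.Eventually.of_forall heq)
      _ = (1 - Real.cos (∑ i, (x i : ℝ) * θ i)) *
            ∫ t in Set.Ioi (0:ℝ), Real.exp (-(lam + psiAux d a θ)*t) := integral_const_mul _ _
      _ = (1 - Real.cos (∑ i, (x i : ℝ) * θ i)) * (1/(lam + psiAux d a θ)) := by
            rw [rho_exp_int hb]
      _ = (1 - Real.cos (∑ i, (x i : ℝ) * θ i)) / (lam + psiAux d a θ) := mul_one_div _ _
  -- assemble
  rw [Glam, Glam, ← integral_sub (hint 0) (hint x),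
    integral_congr_ae (Filter.Eventually.of_forall hpt), integral_const_mul]
  congr 1
  rw [integral_integral_swap hFprod]
  exact integral_congr_ae (Filter.Eventually.of_forall hinner)

lemma rho_lim (hpos : ∀ z : Fin d → ℤ, z ≠ 0 → 0 ≤ a z) (hsum : HasSum a 0)
    (hirr : AddSubgroup.closure {z : Fin d → ℤ | 0 < a z} = ⊤) (x : Fin d → ℤ) :
    Tendsto (fun lam : ℝ =>
        ∫ θ in cubeSet d, (1 - Real.cos (∑ i, (x i : ℝ) * θ i)) / (lam + psiAux d a θ))
      (𝓝[>] (0:ℝ))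
      (𝓝 (∫ θ in cubeSet d, (1 - Real.cos (∑ i, (x i : ℝ) * θ i)) / psiAux d a θ)) := by
  obtain ⟨C, hC0, hCb⟩ := rho_cos_bound hpos hsum.summable hirr x
  have hψ := rho_psi_nonneg hpos
  have hψc := rho_continuous_psi hsum
  have hnum : ∀ θ : Fin d → ℝ, 0 ≤ 1 - Real.cos (∑ i, (x i : ℝ) * θ i) :=
    fun θ => by nlinarith [Real.cos_le_one (∑ i, (x i : ℝ) * θ i)]
  have hcvol : volume (cubeSet d) < ⊤ := by
    rw [cubeSet]
    exact (isCompact_Icc).measure_lt_top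
  apply tendsto_integral_filter_of_dominated_convergence (fun _ => C)
  · filter_upwards [self_mem_nhdsWithin] with lam _
    apply Measurable.aestronglyMeasurable
    exact Measurable.div (by fun_prop) (by fun_prop)
  · filter_upwards [self_mem_nhdsWithin] with lam (hlam : 0 < lam)
    apply Eventually.of_forall
    intro θ
    have hden : 0 < lam + psiAux d a θ := by linarith [hψ θ]
    rw [Real.norm_eq_abs, abs_of_nonneg (div_nonneg (hnum θ) hden.le), div_le_iff₀ hden]
    calc 1 - Real.cos (∑ i, (x i : ℝ) * θ i) ≤ C * psiAux d a θ := hCb θ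
      _ ≤ C * (lam + psiAux d a θ) := by nlinarith
  · exact integrableOn_const hcvol.ne
  · apply Eventually.of_forall
    intro θ
    by_cases hz : psiAux d a θ = 0
    · have h0 : 1 - Real.cos (∑ i, (x i : ℝ) * θ i) = 0 := by
        have h1 := hCb θ; have h2 := hnum θ; rw [hz, mul_zero] at h1; linarith
      simp only [h0, zero_div]
      exact tendsto_const_nhds
    · have hψpos : 0 < psiAux d a θ := lt_of_le_of_ne (hψ θ) (Ne.symm hz)
      have hden : Tendsto (fun lam : ℝ => lam + psiAux d a θ) (𝓝[>] 0) (𝓝 (psiAux d a θ)) := by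
        have := (tendsto_id.mono_left nhdsWithin_le_nhds :
          Tendsto (fun lam : ℝ => lam) (𝓝[>] (0:ℝ)) (𝓝 0)).add_const (psiAux d a θ)
        simpa using this
      exact (tendsto_const_nhds.div hden hz)

end Aux

/-- For every `d ≥ 1` and `x ≠ 0`, the limit `lim_{λ→0+} a (G_λ(0,0) - G_λ(0,x))`
exists, is finite, and equals `ρ_d(x)` (given by the Fourier integral formula). -/
theorem rho_as_limit
    (d : ℕ) (hd : 1 ≤ d) (a : (Fin d → ℤ) → ℝ)
    (hpos : ∀ z : Fin d → ℤ, z ≠ 0 → 0 ≤ a z)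
    (hneg : a 0 < 0)
    (hsymm : ∀ z : Fin d → ℤ, a (-z) = a z)
    (hsum : HasSum a 0)
    (hvar : Summable fun z : Fin d → ℤ => (∑ i, ((z i : ℝ)) ^ 2) * a z)
    (hirr : AddSubgroup.closure {z : Fin d → ℤ | 0 < a z} = ⊤)
    (x : Fin d → ℤ) (hx : x ≠ 0) :
    Tendsto (fun lam : ℝ => (-(a 0)) * (Glam d a lam 0 0 - Glam d a lam 0 x))
      (𝓝[>] (0 : ℝ)) (𝓝 (rhoConst d a x)) := by
  have hrho : rhoConst d a x
      = (-(a 0) * ((2*π)^d)⁻¹) *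
        ∫ θ in cubeSet d, (1 - Real.cos (∑ i, (x i : ℝ) * θ i)) / psiAux d a θ := by
    rw [rhoConst, if_neg hx]
    have hint : ∀ θ : Fin d → ℝ,
        (Real.cos (∑ i, (x i : ℝ) * θ i) - 1) / phiSymb d a θ
          = (1 - Real.cos (∑ i, (x i : ℝ) * θ i)) / psiAux d a θ := by
      intro θ
      rw [rho_phi_eq_neg_psi hsum θ,
        show Real.cos (∑ i, (x i : ℝ) * θ i) - 1 = -(1 - Real.cos (∑ i, (x i : ℝ) * θ i)) by ring,
        neg_div_neg_eq]
    simp only [hint, div_eq_mul_inv, cubeSet]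
  rw [hrho]
  have hT := (rho_lim hpos hsum hirr x).const_mul (-(a 0) * ((2*π)^d)⁻¹)
  apply hT.congr'
  filter_upwards [self_mem_nhdsWithin] with lam (hlam : 0 < lam)
  rw [rho_glam_diff hpos hsum x hlam]
  ring
end
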